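/- arXiv:2311.02784 — 3 statements merged into one kernel-verified Lean document; each statement's English description precedes it below -/
import Mathlib

section
/- In the free group F_2 = ⟨a,b⟩, the intersection of the subgroups H = ⟨a², b²a²b²⟩ and H' = ⟨b², a²b²a²⟩ equals ⟨a²b²a²b², b²a²b²a²⟩. -/
/-- `s` is a free basis of the group `G`: the induced map from the free group is bijective. -/
def IsFreeBasis {G : Type} [Group G] {ι : Type} (s : ι → G) : Prop :=
  Function.Bijective (FreeGroup.lift s)

/-- `s` is a free basis of the subgroup `H` of `G`. -/
def IsBasisOf {G : Type} [Group G] {ι : Type} (s : ι → G) (H : Subgroup G) : Prop :=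
  Function.Injective (FreeGroup.lift s) ∧ Subgroup.closure (Set.range s) = H

/-- `A` is a free factor of `G`: `G` is the internal free product of `A` with some subgroup `B`. -/
def IsFreeFactor {G : Type} [Group G] (A : Subgroup G) : Prop :=
  ∃ B : Subgroup G, Function.Bijective (Monoid.Coprod.lift A.subtype B.subtype)

/-- `A` is a free factor of the subgroup `H` of `G`. -/
def IsFreeFactorIn {G : Type} [Group G] (A H : Subgroup G) : Prop :=
  A ≤ H ∧ IsFreeFactor (A.subgroupOf H)

/-- The subgroup `H` is a free group of rank `r`. -/
def HasRank {G : Type} [Group G] (H : Subgroup G) (r : ℕ) : Prop :=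
  Nonempty (FreeGroup (Fin r) ≃* H)

/-- The subgroup generated by the first `i` elements of the family `b`. -/
def prefixSubgroup {G : Type} [Group G] {n : ℕ} (b : Fin n → G) (i : ℕ) : Subgroup G :=
  Subgroup.closure (b '' {j | (j : ℕ) < i})

/-- `b` is an echelon basis for the subgroup `H`: it is a basis of the ambient group and
the ranks of the intersections with the prefix subgroups grow by at most one at each step. -/
def IsEchelonBasis {G : Type} [Group G] {n : ℕ} (b : Fin n → G) (H : Subgroup G) : Prop :=
  IsFreeBasis b ∧ ∀ i : Fin n, ∃ r r' : ℕ,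
    HasRank (H ⊓ prefixSubgroup b (i : ℕ)) r' ∧
    HasRank (H ⊓ prefixSubgroup b ((i : ℕ) + 1)) r ∧ r ≤ r' + 1

/-- `H` is an echelon subgroup: the ambient group admits an ordered basis which is an
echelon basis for `H`. -/
def IsEchelon {G : Type} [Group G] (H : Subgroup G) : Prop :=
  ∃ (m : ℕ) (b : Fin m → G), IsEchelonBasis b H

/-- `B` is the free factor support of `H`: the minimal (by inclusion) free factor containing `H`. -/
def IsFFSupport {G : Type} [Group G] (H B : Subgroup G) : Prop :=
  IsFreeFactor B ∧ H ≤ B ∧ ∀ B' : Subgroup G, IsFreeFactor B' → H ≤ B' → B ≤ B'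

noncomputable def a : FreeGroup (Fin 2) := FreeGroup.of 0

noncomputable def b : FreeGroup (Fin 2) := FreeGroup.of 1


namespace Statement13Aux

open FreeGroup

abbrev Ltr := Fin 2 × Bool

section Reader
variable {S : Type} (d : S → Ltr → Option S)

def readT : S → List Ltr → Option S
  | s, [] => some s
  | s, l :: L => match d s l with
    | some t => readT t L
    | none => none

theorem readT_nil (s : S) : readT d s [] = some s := rfl

theorem readT_cons (s : S) (l : Ltr) (L : List Ltr) :
    readT d s (l :: L) = (d s l).bind (fun t => readT d t L) := by
  cases hd : d s l <;> simp [readT, hd]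

def Sym : Prop := ∀ s l t, d s l = some t → d t (l.1, !l.2) = some s

theorem read_append (s : S) (L1 L2 : List Ltr) :
    readT d s (L1 ++ L2) = (readT d s L1).bind (fun m => readT d m L2) := by
  induction L1 generalizing s with
  | nil => simp [readT]
  | cons l L ih =>
    simp only [List.cons_append, readT]
    cases d s l with
    | none => simp
    | some m => simp [ih m]

theorem read_step (hs : Sym d) (L1 L2 : List Ltr) (x : Fin 2) (b' : Bool) (s t : S)
    (h : readT d s (L1 ++ (x, b') :: (x, !b') :: L2) = some t) :
    readT d s (L1 ++ L2) = some t := by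
  induction L1 generalizing s with
  | nil =>
    simp only [List.nil_append, readT] at h ⊢
    cases hd : d s (x, b') with
    | none => rw [hd] at h; exact absurd h (by simp)
    | some m =>
      rw [hd] at h
      simp only [readT] at h
      have h2 : d m (x, !b') = some s := hs s (x, b') m hd
      rw [h2] at h
      exact h
  | cons l L ih =>
    simp only [List.cons_append, readT] at h ⊢
    cases hd : d s l with
    | none => rw [hd] at h; exact h
    | some m => rw [hd] at h; exact ih m h

theorem read_red (hs : Sym d) {L1 L2 : List Ltr} (hr : Red L1 L2) {s t : S}
    (h : readT d s L1 = some t) : readT d s L2 = some t := by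
  induction hr with
  | refl => exact h
  | tail _ step ih =>
    cases step with
    | @not La Lb x b' => exact read_step d hs La Lb x b' s t ih

theorem read_invRev (hs : Sym d) {L : List Ltr} {s t : S}
    (h : readT d s L = some t) : readT d t (invRev L) = some s := by
  induction L generalizing s with
  | nil =>
    simp only [readT] at h
    cases h
    simp [invRev, readT]
  | cons l L ih =>
    simp only [readT] at h
    cases hd : d s l with
    | none => rw [hd] at h; exact absurd h (by simp)
    | some m =>
      rw [hd] at h
      have h1 := ih h
      have hinv : invRev (l :: L) = invRev L ++ [(l.1, !l.2)] := by
        simp [invRev]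
      rw [hinv, read_append, h1]
      simp only [Option.bind_some, readT]
      rw [hs s l m hd]

def readSub (hs : Sym d) (base : S) : Subgroup (FreeGroup (Fin 2)) where
  carrier := {w | readT d base w.toWord = some base}
  one_mem' := by simp [Set.mem_setOf_eq, toWord_one, readT]
  mul_mem' := by
    intro x y hx hy
    simp only [Set.mem_setOf_eq] at *
    have h1 : readT d base (x.toWord ++ y.toWord) = some base := by
      rw [read_append, hx]
      simpa using hy
    have hxy : x * y = FreeGroup.mk (x.toWord ++ y.toWord) := by
      conv_lhs => rw [← mk_toWord (x := x), ← mk_toWord (x := y)]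
      rw [mul_mk]
    have hred : Red (x.toWord ++ y.toWord) ((x * y).toWord) := by
      rw [hxy, toWord_mk]
      exact reduce.red
    exact read_red d hs hred h1
  inv_mem' := by
    intro x hx
    simp only [Set.mem_setOf_eq] at *
    rw [toWord_inv]
    exact read_invRev d hs hx

theorem mem_readSub (hs : Sym d) (base : S) (w : FreeGroup (Fin 2)) :
    w ∈ readSub d hs base ↔ readT d base w.toWord = some base := Iff.rfl

end Reader

def dH : Fin 7 → Ltr → Option (Fin 7) := fun s l =>
  match l with
  | (0, true)  => ![some 1, some 0, none, some 4, some 5, none, none] s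
  | (0, false) => ![some 1, some 0, none, none, some 3, some 4, none] s
  | (1, true)  => ![some 2, none, some 3, none, none, some 6, some 0] s
  | (1, false) => ![some 6, none, some 0, some 2, none, none, some 5] s

def dK : Fin 7 → Ltr → Option (Fin 7) := fun s l =>
  match l with
  | (0, true)  => ![some 2, none, some 3, none, none, some 6, some 0] s
  | (0, false) => ![some 6, none, some 0, some 2, none, none, some 5] s
  | (1, true)  => ![some 1, some 0, none, some 4, some 5, none, none] s
  | (1, false) => ![some 1, some 0, none, none, some 3, some 4, none] s

def gl : Fin 7 → Fin 7 → List Ltr :=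
  ![![[], [], [], [(0, true), (0, true)], [], [(0, false), (0, false)], [(0, false), (0, false)]],
   ![[(0, false)], [], [(0, true)], [(0, true)], [], [(0, false), (0, false), (0, false)], [(0, false)]],
   ![[(1, true)], [(1, true)], [], [], [(0, true), (0, true), (1, true)], [(1, true)], []],
   ![[(1, true), (1, true)], [(1, true), (1, true)], [], [], [(1, true)], [(0, true), (0, true), (1, true), (1, true)], []],
   ![[(0, true)], [], [(1, true), (1, true), (0, true)], [(0, true)], [], [], [(1, false), (1, false), (0, false)]],
   ![[(1, false), (1, false)], [(1, false), (1, false)], [(0, true), (0, true)], [(0, false), (0, false), (1, false), (1, false)], [], [], [(0, true)]],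
   ![[(1, false)], [(1, false)], [], [(1, false)], [(0, false), (0, false), (1, false)], [(1, true)], []]]

def w1 : List Ltr := [(0, true), (0, true), (1, true), (1, true), (0, true), (0, true), (1, true), (1, true)]
def w2 : List Ltr := [(1, true), (1, true), (0, true), (0, true), (1, true), (1, true), (0, true), (0, true)]

theorem symH : Sym dH := by unfold Sym; decide
theorem symK : Sym dK := by unfold Sym; decide

theorem edges : ∀ (s1 s2 t1 t2 : Fin 7) (l : Ltr), dH s1 l = some t1 → dK s2 l = some t2 →
    reduce (gl s1 s2 ++ l :: invRev (gl t1 t2)) = [] ∨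
    reduce (gl s1 s2 ++ l :: invRev (gl t1 t2)) = w1 ∨
    reduce (gl s1 s2 ++ l :: invRev (gl t1 t2)) = w2 ∨
    reduce (gl s1 s2 ++ l :: invRev (gl t1 t2)) = invRev w1 ∨
    reduce (gl s1 s2 ++ l :: invRev (gl t1 t2)) = invRev w2 := by decide

theorem toWord_n1 : (a ^ 2 * b ^ 2 * a ^ 2 * b ^ 2).toWord = w1 := by decide
theorem toWord_n2 : (b ^ 2 * a ^ 2 * b ^ 2 * a ^ 2).toWord = w2 := by decide

noncomputable def N : Subgroup (FreeGroup (Fin 2)) :=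
  Subgroup.closure {a ^ 2 * b ^ 2 * a ^ 2 * b ^ 2, b ^ 2 * a ^ 2 * b ^ 2 * a ^ 2}

theorem n1_mem : a ^ 2 * b ^ 2 * a ^ 2 * b ^ 2 ∈ N :=
  Subgroup.subset_closure (Set.mem_insert _ _)
theorem n2_mem : b ^ 2 * a ^ 2 * b ^ 2 * a ^ 2 ∈ N :=
  Subgroup.subset_closure (Set.mem_insert_of_mem _ rfl)

theorem mk_mem_of_reduce {X : List Ltr}
    (h : reduce X = [] ∨ reduce X = w1 ∨ reduce X = w2 ∨ reduce X = invRev w1 ∨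
      reduce X = invRev w2) : FreeGroup.mk X ∈ N := by
  have hX : (FreeGroup.mk X).toWord = reduce X := toWord_mk
  rcases h with h | h | h | h | h
  · have : FreeGroup.mk X = 1 := toWord_injective (by rw [hX, h, toWord_one])
    rw [this]; exact one_mem N
  · have : FreeGroup.mk X = a ^ 2 * b ^ 2 * a ^ 2 * b ^ 2 :=
      toWord_injective (by rw [hX, h, toWord_n1])
    rw [this]; exact n1_mem
  · have : FreeGroup.mk X = b ^ 2 * a ^ 2 * b ^ 2 * a ^ 2 :=
      toWord_injective (by rw [hX, h, toWord_n2])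
    rw [this]; exact n2_mem
  · have : FreeGroup.mk X = (a ^ 2 * b ^ 2 * a ^ 2 * b ^ 2)⁻¹ :=
      toWord_injective (by rw [hX, h, toWord_inv, toWord_n1])
    rw [this]; exact inv_mem n1_mem
  · have : FreeGroup.mk X = (b ^ 2 * a ^ 2 * b ^ 2 * a ^ 2)⁻¹ :=
      toWord_injective (by rw [hX, h, toWord_inv, toWord_n2])
    rw [this]; exact inv_mem n2_mem

theorem main_ind (L : List Ltr) : ∀ s1 s2 t1 t2 : Fin 7,
    readT dH s1 L = some t1 → readT dK s2 L = some t2 →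
    FreeGroup.mk (gl s1 s2) * FreeGroup.mk L * (FreeGroup.mk (gl t1 t2))⁻¹ ∈ N := by
  induction L with
  | nil =>
    intro s1 s2 t1 t2 h1 h2
    rw [readT_nil] at h1 h2
    cases h1; cases h2
    have : FreeGroup.mk (gl s1 s2) * FreeGroup.mk ([] : List Ltr) *
        (FreeGroup.mk (gl s1 s2))⁻¹ = 1 := by
      rw [← one_eq_mk]; group
    rw [this]; exact one_mem N
  | cons l L ih =>
    intro s1 s2 t1 t2 h1 h2
    rw [readT_cons] at h1 h2
    cases hd1 : dH s1 l with
    | none => rw [hd1] at h1; exact absurd h1 (by simp)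
    | some m1 =>
    cases hd2 : dK s2 l with
    | none => rw [hd2] at h2; exact absurd h2 (by simp)
    | some m2 =>
    rw [hd1] at h1; rw [hd2] at h2
    simp only [Option.bind_some] at h1 h2
    have hedge : FreeGroup.mk (gl s1 s2) * FreeGroup.mk [l] * (FreeGroup.mk (gl m1 m2))⁻¹ ∈ N := by
      have hm : FreeGroup.mk (gl s1 s2) * FreeGroup.mk [l] * (FreeGroup.mk (gl m1 m2))⁻¹ =
          FreeGroup.mk (gl s1 s2 ++ l :: invRev (gl m1 m2)) := by
        rw [inv_mk, mul_mk, mul_mk]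
        congr 1
        simp
      rw [hm]
      exact mk_mem_of_reduce (edges s1 s2 m1 m2 l hd1 hd2)
    have hsplit : FreeGroup.mk (gl s1 s2) * FreeGroup.mk (l :: L) * (FreeGroup.mk (gl t1 t2))⁻¹ =
        (FreeGroup.mk (gl s1 s2) * FreeGroup.mk [l] * (FreeGroup.mk (gl m1 m2))⁻¹) *
        (FreeGroup.mk (gl m1 m2) * FreeGroup.mk L * (FreeGroup.mk (gl t1 t2))⁻¹) := by
      have : FreeGroup.mk (l :: L) = FreeGroup.mk [l] * FreeGroup.mk L := by
        rw [mul_mk]; rfl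
      rw [this]; group
    rw [hsplit]
    exact mul_mem hedge (ih m1 m2 t1 t2 h1 h2)

theorem Hle : Subgroup.closure {a ^ 2, b ^ 2 * a ^ 2 * b ^ 2} ≤ readSub dH symH 0 := by
  rw [Subgroup.closure_le]
  rintro x hx
  rcases hx with rfl | hx
  · exact show readT dH 0 (a ^ 2).toWord = some 0 by decide
  · rcases hx with rfl
    exact show readT dH 0 (b ^ 2 * a ^ 2 * b ^ 2).toWord = some 0 by decide

theorem Kle : Subgroup.closure {b ^ 2, a ^ 2 * b ^ 2 * a ^ 2} ≤ readSub dK symK 0 := by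
  rw [Subgroup.closure_le]
  rintro x hx
  rcases hx with rfl | hx
  · exact show readT dK 0 (b ^ 2).toWord = some 0 by decide
  · rcases hx with rfl
    exact show readT dK 0 (a ^ 2 * b ^ 2 * a ^ 2).toWord = some 0 by decide

end Statement13Aux

theorem statement13 :
    Subgroup.closure {a ^ 2, b ^ 2 * a ^ 2 * b ^ 2} ⊓
      Subgroup.closure {b ^ 2, a ^ 2 * b ^ 2 * a ^ 2} =
    Subgroup.closure {a ^ 2 * b ^ 2 * a ^ 2 * b ^ 2, b ^ 2 * a ^ 2 * b ^ 2 * a ^ 2} := by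
  open Statement13Aux in
  apply le_antisymm
  · intro w hw
    obtain ⟨hw1, hw2⟩ := Subgroup.mem_inf.mp hw
    have h1 : readT dH 0 w.toWord = some 0 := Hle hw1
    have h2 : readT dK 0 w.toWord = some 0 := Kle hw2
    have hmain := main_ind w.toWord 0 0 0 0 h1 h2
    have hgl : gl 0 0 = [] := rfl
    rw [hgl, ← FreeGroup.one_eq_mk, FreeGroup.mk_toWord] at hmain
    simpa [N] using hmain
  · rw [Subgroup.closure_le]
    rintro x hx
    have hH : x ∈ Subgroup.closure {a ^ 2, b ^ 2 * a ^ 2 * b ^ 2} ∧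
        x ∈ Subgroup.closure {b ^ 2, a ^ 2 * b ^ 2 * a ^ 2} := by
      rcases hx with rfl | hx
      · constructor
        · have : a ^ 2 * b ^ 2 * a ^ 2 * b ^ 2 = a ^ 2 * (b ^ 2 * a ^ 2 * b ^ 2) := by group
          rw [this]
          exact mul_mem (Subgroup.subset_closure (Set.mem_insert _ _))
            (Subgroup.subset_closure (Set.mem_insert_of_mem _ rfl))
        · have : a ^ 2 * b ^ 2 * a ^ 2 * b ^ 2 = (a ^ 2 * b ^ 2 * a ^ 2) * b ^ 2 := by group
          rw [this]
          exact mul_mem (Subgroup.subset_closure (Set.mem_insert_of_mem _ rfl))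
            (Subgroup.subset_closure (Set.mem_insert _ _))
      · rcases hx with rfl
        constructor
        · have : b ^ 2 * a ^ 2 * b ^ 2 * a ^ 2 = (b ^ 2 * a ^ 2 * b ^ 2) * a ^ 2 := by group
          rw [this]
          exact mul_mem (Subgroup.subset_closure (Set.mem_insert_of_mem _ rfl))
            (Subgroup.subset_closure (Set.mem_insert _ _))
        · have : b ^ 2 * a ^ 2 * b ^ 2 * a ^ 2 = b ^ 2 * (a ^ 2 * b ^ 2 * a ^ 2) := by group
          rw [this]
          exact mul_mem (Subgroup.subset_closure (Set.mem_insert _ _))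
            (Subgroup.subset_closure (Set.mem_insert_of_mem _ rfl))
    exact Subgroup.mem_inf.mpr hH
end

section
/- The subgroups H = ⟨a², b²a²b²⟩ and H' = ⟨b², a²b²a²⟩ of F_2 = ⟨a,b⟩ are both echelon, but their intersection H ∩ H' = ⟨a²b²a²b², b²a²b²a²⟩ is not echelon. In particular, the intersection of two echelon subgroups of a free group need not be echelon. -/
namespace S14


abbrev G := FreeGroup (Fin 2)
abbrev Lt := (Fin 2) × Bool

/-! ### Generic partial-automaton trace machinery -/

section Trace

variable {V : Type} (step : V → Lt → Option V)

def evalW : List Lt → V → Option V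
  | [], v => some v
  | l :: w, v => (step v l).bind (evalW w)

theorem evalW_append (u w : List Lt) (v : V) :
    evalW step (u ++ w) v = (evalW step u v).bind (evalW step w) := by
  induction u generalizing v with
  | nil => rfl
  | cons l t ih =>
    show (step v l).bind (evalW step (t ++ w)) = _
    cases h : step v l with
    | none => simp [evalW, h]
    | some m => simp [evalW, h, ih]

theorem trace_split {u w : List Lt} {x z : V}
    (h : evalW step (u ++ w) x = some z) :
    ∃ y, evalW step u x = some y ∧ evalW step w y = some z := by
  rw [evalW_append] at h
  cases hu : evalW step u x with
  | none => rw [hu] at h; simp at h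
  | some y => rw [hu] at h; exact ⟨y, rfl, h⟩

/-- The step function has symmetric (involutive) edges. -/
abbrev Sym : Prop := ∀ u l v, step u l = some v → step v (l.1, !l.2) = some u

theorem trace_invRev (hs : Sym step) :
    ∀ (w : List Lt) (u v : V), evalW step w u = some v →
      evalW step (FreeGroup.invRev w) v = some u := by
  intro w
  induction w with
  | nil =>
    intro u v h
    simp [evalW] at h
    subst h
    simp [FreeGroup.invRev, evalW]
  | cons l t ih =>
    intro u v h
    have hinv : FreeGroup.invRev (l :: t) = FreeGroup.invRev t ++ [(l.1, !l.2)] := by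
      simp [FreeGroup.invRev]
    rw [hinv]
    obtain ⟨m, hm⟩ : ∃ m, step u l = some m := by
      cases hst : step u l with
      | none => rw [show evalW step (l :: t) u = (step u l).bind (evalW step t) from rfl, hst] at h; simp at h
      | some m => exact ⟨m, rfl⟩
    have ht : evalW step t m = some v := by
      rw [show evalW step (l :: t) u = (step u l).bind (evalW step t) from rfl, hm] at h
      simpa using h
    rw [evalW_append, ih m v ht]
    show (step m (l.1, !l.2)).bind (evalW step []) = some u
    rw [hs u l m hm]
    rfl

theorem trace_red_step (hs : Sym step) {w w' : List Lt} (h : FreeGroup.Red.Step w w') :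
    ∀ {u v : V}, evalW step w u = some v → evalW step w' u = some v := by
  cases h with
  | @not L₁ L₂ x b =>
    intro u v he
    obtain ⟨y1, h1, h2⟩ := trace_split step he
    obtain ⟨y2, hy2, h3⟩ : ∃ y2, step y1 (x, b) = some y2 ∧
        evalW step ((x, !b) :: L₂) y2 = some v := by
      cases hst : step y1 (x, b) with
      | none => rw [show evalW step ((x,b) :: (x,!b) :: L₂) y1 = (step y1 (x,b)).bind _ from rfl, hst] at h2; simp at h2
      | some m =>
        rw [show evalW step ((x,b) :: (x,!b) :: L₂) y1 = (step y1 (x,b)).bind _ from rfl, hst] at h2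
        exact ⟨m, rfl, by simpa using h2⟩
    obtain ⟨y3, hy3, h4⟩ : ∃ y3, step y2 (x, !b) = some y3 ∧ evalW step L₂ y3 = some v := by
      cases hst : step y2 (x, !b) with
      | none => rw [show evalW step ((x,!b) :: L₂) y2 = (step y2 (x,!b)).bind _ from rfl, hst] at h3; simp at h3
      | some m =>
        rw [show evalW step ((x,!b) :: L₂) y2 = (step y2 (x,!b)).bind _ from rfl, hst] at h3
        exact ⟨m, rfl, by simpa using h3⟩
    have : step y2 (x, !b) = some y1 := hs y1 (x, b) y2 hy2
    have hy13 : y3 = y1 := by rw [this] at hy3; exact (Option.some_inj.1 hy3).symm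
    rw [evalW_append, h1]
    simpa [hy13] using h4

theorem trace_red (hs : Sym step) {w w' : List Lt} (h : FreeGroup.Red w w') :
    ∀ {u v : V}, evalW step w u = some v → evalW step w' u = some v := by
  induction h with
  | refl => intro u v h; exact h
  | tail _ hstep ih => intro u v h; exact trace_red_step step hs hstep (ih h)

/-- The subgroup of elements tracing a loop at `v0`. -/
def traceGroup (hs : Sym step) (v0 : V) : Subgroup G where
  carrier := {g | evalW step g.toWord v0 = some v0}
  one_mem' := by simp [FreeGroup.toWord_one, evalW]
  mul_mem' := by
    intro g h hg hh
    have hgh : g * h = FreeGroup.mk (g.toWord ++ h.toWord) := by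
      rw [← FreeGroup.mul_mk, FreeGroup.mk_toWord, FreeGroup.mk_toWord]
    show evalW step (g * h).toWord v0 = some v0
    rw [hgh, FreeGroup.toWord_mk]
    refine trace_red step hs FreeGroup.reduce.red ?_
    rw [evalW_append, hg]
    exact hh
  inv_mem' := by
    intro g hg
    show evalW step g⁻¹.toWord v0 = some v0
    rw [FreeGroup.toWord_inv]
    exact trace_invRev step hs _ _ _ hg

theorem mem_traceGroup {hs : Sym step} {v0 : V} {g : G} (h : g ∈ traceGroup step hs v0) :
    evalW step g.toWord v0 = some v0 := h

theorem trace_parity {V : Type} (step : V → Lt → Option V) (P : V → ZMod 2) (c : Fin 2)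
    (hP : ∀ u l v, step u l = some v → P v = P u + (if l.1 = c then 1 else 0)) :
    ∀ (w : List Lt) (u v : V), evalW step w u = some v →
      P v = P u + (w.countP (fun x => x.1 = c) : ZMod 2) := by
  intro w
  induction w with
  | nil => intro u v h; simp [evalW] at h; subst h; simp
  | cons l t ih =>
    intro u v h
    obtain ⟨m, hm, ht⟩ : ∃ m, step u l = some m ∧ evalW step t m = some v := by
      cases hst : step u l with
      | none => rw [show evalW step (l :: t) u = (step u l).bind _ from rfl, hst] at h; simp at h
      | some m =>
        rw [show evalW step (l :: t) u = (step u l).bind _ from rfl, hst] at h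
        exact ⟨m, rfl, by simpa using h⟩
    rw [ih m v ht, hP u l m hm, List.countP_cons]
    push_cast
    by_cases hc : l.1 = c <;> simp [hc] <;> ring

theorem trace_height {V : Type} (step : V → Lt → Option V) (q : V → ℤ) (c : Fin 2)
    (hq : ∀ u s v, step u (c, s) = some v → q v = q u + (if s then 1 else -1)) :
    ∀ (n : ℕ) (s : Bool) (u v : V),
      evalW step (List.replicate n (c, s)) u = some v →
      q v = q u + n * (if s then 1 else -1) := by
  intro n
  induction n with
  | zero => intro s u v h; simp [evalW] at h; subst h; simp
  | succ n ih =>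
    intro s u v h
    rw [List.replicate_succ] at h
    obtain ⟨m, hm, ht⟩ : ∃ m, step u (c, s) = some m ∧
        evalW step (List.replicate n (c, s)) m = some v := by
      cases hst : step u (c, s) with
      | none => rw [show evalW step ((c,s) :: _) u = (step u (c,s)).bind _ from rfl, hst] at h; simp at h
      | some m =>
        rw [show evalW step ((c,s) :: _) u = (step u (c,s)).bind _ from rfl, hst] at h
        exact ⟨m, rfl, by simpa using h⟩
    rw [ih s m v ht, hq u s m hm]
    push_cast
    ring

end Trace

/-! ### The two Stallings graphs -/

def stepH : Fin 7 → Lt → Option (Fin 7) := fun v l =>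
  match v.val, l.1.val, l.2 with
  | 0, 0, true => some 1
  | 1, 0, true => some 0
  | 3, 0, true => some 4
  | 4, 0, true => some 5
  | 1, 0, false => some 0
  | 0, 0, false => some 1
  | 4, 0, false => some 3
  | 5, 0, false => some 4
  | 0, 1, true => some 2
  | 2, 1, true => some 3
  | 5, 1, true => some 6
  | 6, 1, true => some 0
  | 2, 1, false => some 0
  | 3, 1, false => some 2
  | 6, 1, false => some 5
  | 0, 1, false => some 6
  | _, _, _ => none

def swapL : Lt → Lt := fun l => (if l.1 = 0 then 1 else 0, l.2)

def stepH' : Fin 7 → Lt → Option (Fin 7) := fun v l => stepH v (swapL l)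

def paH : Fin 7 → ZMod 2 := fun v => match v.val with
  | 1 => 1 | 4 => 1 | _ => 0

def pbH : Fin 7 → ZMod 2 := fun v => match v.val with
  | 2 => 1 | 6 => 1 | _ => 0

def qH : Fin 7 → ℤ := fun v => match v.val with
  | 2 => 1 | 3 => 2 | 5 => -2 | 6 => -1 | 1 => 99 | 4 => 98 | _ => 0

theorem symH : Sym stepH := by decide

theorem symH' : Sym stepH' := by decide

theorem hpaH : ∀ u l v, stepH u l = some v → paH v = paH u + (if l.1 = 0 then 1 else 0) := by
  decide

theorem hpbH : ∀ u l v, stepH u l = some v → pbH v = pbH u + (if l.1 = 1 then 1 else 0) := by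
  decide

theorem hpaH' : ∀ u l v, stepH' u l = some v → pbH v = pbH u + (if l.1 = 0 then 1 else 0) := by
  decide

theorem hpbH' : ∀ u l v, stepH' u l = some v → paH v = paH u + (if l.1 = 1 then 1 else 0) := by
  decide

theorem hBL : ∀ u l m l' v, stepH u l = some m → stepH m l' = some v → l.1 ≠ l'.1 →
    paH m = 0 ∧ pbH m = 0 := by decide

theorem hqH : ∀ u s v, stepH u ((1 : Fin 2), s) = some v → qH v = qH u + (if s then 1 else -1) := by
  decide

theorem hqH' : ∀ u s v, stepH' u ((0 : Fin 2), s) = some v → qH v = qH u + (if s then 1 else -1) := by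
  decide




/-! ### Reduced words -/

def Cancels (x y : Lt) : Prop := x.1 = y.1 ∧ x.2 = !y.2

instance (x y : Lt) : Decidable (Cancels x y) :=
  inferInstanceAs (Decidable (_ ∧ _))

def IsRed (w : List Lt) : Prop := List.Chain' (fun x y => ¬ Cancels x y) w

def isRedDec : (w : List Lt) → Decidable (IsRed w)
  | [] => isTrue List.isChain_nil
  | [x] => isTrue (List.isChain_singleton x)
  | x :: y :: t =>
    match isRedDec (y :: t), (inferInstance : Decidable (Cancels x y)) with
    | isTrue ht, isFalse hc => isTrue (List.isChain_cons_cons.2 ⟨hc, ht⟩)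
    | isFalse ht, _ => isFalse (fun h => ht (List.isChain_cons_cons.1 h).2)
    | _, isTrue hc => isFalse (fun h => (List.isChain_cons_cons.1 h).1 hc)

instance (w : List Lt) : Decidable (IsRed w) := isRedDec w

theorem reduce_eq_self_of_isRed : ∀ {w : List Lt}, IsRed w → FreeGroup.reduce w = w := by
  intro w
  induction w with
  | nil => intro _; rfl
  | cons x t ih =>
    intro h
    have ht : FreeGroup.reduce t = t := ih h.tail
    rw [FreeGroup.reduce.cons, ht]
    cases t with
    | nil => rfl
    | cons y s =>
      have hxy : ¬ Cancels x y := (List.isChain_cons_cons.1 h).1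
      have hxy' : ¬ (x.1 = y.1 ∧ x.2 = !y.2) := hxy
      show (if x.1 = y.1 ∧ x.2 = !y.2 then s else x :: y :: s) = x :: y :: s
      rw [if_neg hxy']

theorem isRed_reduce (w : List Lt) : IsRed (FreeGroup.reduce w) := by
  induction w with
  | nil => exact List.isChain_nil
  | cons x t ih =>
    rw [FreeGroup.reduce.cons]
    cases h : FreeGroup.reduce t with
    | nil => exact List.isChain_singleton _
    | cons y s =>
      rw [h] at ih
      show IsRed (if x.1 = y.1 ∧ x.2 = !y.2 then s else x :: y :: s)
      by_cases hc : x.1 = y.1 ∧ x.2 = !y.2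
      · rw [if_pos hc]; exact ih.tail
      · rw [if_neg hc]; exact List.isChain_cons_cons.2 ⟨hc, ih⟩

theorem isRed_toWord (g : G) : IsRed g.toWord := by
  rw [← FreeGroup.reduce_toWord g]; exact isRed_reduce _

theorem toWord_mk_of_isRed {w : List Lt} (h : IsRed w) :
    (FreeGroup.mk w).toWord = w := by
  rw [FreeGroup.toWord_mk, reduce_eq_self_of_isRed h]

/-- boundary condition for cyclically reduced words -/
def Bd (w : List Lt) : Prop := ∀ x ∈ w.getLast?, ∀ y ∈ w.head?, ¬ Cancels x y

theorem invRev_cons (l : Lt) (t : List Lt) :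
    FreeGroup.invRev (l :: t) = FreeGroup.invRev t ++ [(l.1, !l.2)] := by
  simp [FreeGroup.invRev]

/-- Cyclic decomposition of a nontrivial element. -/
theorem cyc_exists : ∀ (n : ℕ) (g : G), g.toWord.length ≤ n → g ≠ 1 →
    ∃ Z R : List Lt, R ≠ [] ∧ IsRed R ∧ Bd R ∧
      g.toWord = Z ++ R ++ FreeGroup.invRev Z := by
  intro n
  induction n with
  | zero =>
    intro g hlen hg
    exfalso
    exact hg (FreeGroup.toWord_eq_nil_iff.1 (List.length_eq_zero_iff.1 (Nat.le_zero.1 hlen)))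
  | succ n ih =>
    intro g hlen hg
    by_cases hC : Bd g.toWord
    · exact ⟨[], g.toWord, fun h => hg (FreeGroup.toWord_eq_nil_iff.1 h), isRed_toWord g, hC,
        by simp [FreeGroup.invRev]⟩
    · rw [Bd] at hC
      push_neg at hC
      obtain ⟨x, hx, y, hy, hcan⟩ := hC
      obtain ⟨t, hw0⟩ : ∃ t, g.toWord = y :: t := by
        cases hwc : g.toWord with
        | nil => rw [hwc] at hy; simp at hy
        | cons y0 t =>
          rw [hwc] at hy
          simp at hy
          subst hy
          exact ⟨t, rfl⟩
      rcases List.eq_nil_or_concat t with rfl | ⟨t₀, z, hcon⟩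
      · -- singleton word: it would cancel with itself, impossible
        exfalso
        rw [hw0] at hx
        simp at hx
        subst hx
        exact (Bool.not_ne_self y.2) hcan.2.symm
      · rw [List.concat_eq_append] at hcon
        subst hcon
        have hw : g.toWord = (y :: t₀) ++ [z] := by rw [hw0]; rfl
        have hz : z = x := by
          rw [hw] at hx
          rw [List.getLast?_append_of_ne_nil _ (List.cons_ne_nil z [])] at hx
          simpa using hx
        subst hz
        have hred : IsRed g.toWord := isRed_toWord g
        have hredt : IsRed t₀ := by
          have h1 : IsRed (t₀ ++ [z]) := by
            rw [hw0] at hred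
            exact hred.tail
          exact (List.isChain_append.1 h1).1
        have ht₀ : t₀ ≠ [] := by
          rintro rfl
          rw [hw0] at hred
          have h1 : ¬ Cancels y z := by
            simpa [IsRed, List.Chain', List.isChain_cons_cons] using hred
          exact h1 ⟨hcan.1.symm, by rw [hcan.2]; simp⟩
        set g' : G := FreeGroup.mk t₀ with hg'
        have hgw' : g'.toWord = t₀ := toWord_mk_of_isRed hredt
        have hg'1 : g' ≠ 1 := by
          intro h
          rw [h] at hgw'
          exact ht₀ (by simpa using hgw'.symm)
        have hlen' : g'.toWord.length ≤ n := by
          rw [hgw']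
          have : g.toWord.length = t₀.length + 2 := by rw [hw]; simp
          omega
        obtain ⟨Z', R, hR, hRred, hRbd, hdec⟩ := ih g' hlen' hg'1
        refine ⟨y :: Z', R, hR, hRred, hRbd, ?_⟩
        have hzval : z = (y.1, !y.2) := by
          rcases hcan with ⟨h1, h2⟩
          rcases z with ⟨z1, z2⟩
          rcases y with ⟨y1, y2⟩
          simp_all
        rw [hw, invRev_cons, hgw'.symm, hdec, hzval]
        simp

/-- iterated concatenation -/
def flat (m : ℕ) (R : List Lt) : List Lt := List.flatten (List.replicate m R)

theorem flat_succ (m : ℕ) (R : List Lt) : flat (m+1) R = R ++ flat m R := by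
  simp [flat, List.replicate_succ]

theorem flat_zero (R : List Lt) : flat 0 R = [] := rfl

theorem flat_head? {R : List Lt} (hR : R ≠ []) {m : ℕ} (hm : 1 ≤ m) :
    (flat m R).head? = R.head? := by
  obtain ⟨m', rfl⟩ : ∃ m', m = m' + 1 := ⟨m - 1, by omega⟩
  rw [flat_succ, List.head?_append_of_ne_nil _ hR]

theorem flat_ne_nil {R : List Lt} (hR : R ≠ []) {m : ℕ} (hm : 1 ≤ m) :
    flat m R ≠ [] := by
  intro h
  have := flat_head? hR hm
  rw [h] at this
  cases R with
  | nil => exact hR rfl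
  | cons x t => simp at this

theorem flat_getLast? {R : List Lt} (hR : R ≠ []) : ∀ {m : ℕ}, 1 ≤ m →
    (flat m R).getLast? = R.getLast? := by
  intro m
  induction m with
  | zero => omega
  | succ m ih =>
    intro _
    rw [flat_succ]
    rcases Nat.eq_zero_or_pos m with rfl | hm
    · rw [flat_zero, List.append_nil]
    · rw [List.getLast?_append_of_ne_nil _ (flat_ne_nil hR hm), ih hm]

theorem flat_isRed {R : List Lt} (hRred : IsRed R) (hRbd : Bd R) :
    ∀ m, IsRed (flat m R) := by
  intro m
  induction m with
  | zero => exact List.isChain_nil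
  | succ m ih =>
    rw [flat_succ]
    refine List.isChain_append.2 ⟨hRred, ih, ?_⟩
    intro x hx y hy
    rcases Nat.eq_zero_or_pos m with rfl | hm
    · rw [flat_zero] at hy; simp at hy
    · rw [flat_head? (fun h => by simp [h] at hx) hm] at hy
      exact hRbd x hx y hy

theorem flat_countP (p : Lt → Bool) (R : List Lt) : ∀ m, (flat m R).countP p = m * R.countP p := by
  intro m
  induction m with
  | zero => simp [flat_zero]
  | succ m ih => rw [flat_succ, List.countP_append, ih]; ring

theorem flat_replicate (m : ℕ) (x : Lt) (n : ℕ) :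
    flat m (List.replicate n x) = List.replicate (m * n) x := by
  induction m with
  | zero => simp [flat_zero]
  | succ m ih => rw [flat_succ, ih, ← List.replicate_add]; ring_nf

/-- The key power-word lemma. -/
theorem pow_toWord {g : G} {Z R : List Lt} (hdec : g.toWord = Z ++ R ++ FreeGroup.invRev Z)
    (hR : R ≠ []) (hRred : IsRed R) (hRbd : Bd R) :
    ∀ {m : ℕ}, 1 ≤ m → (g ^ m).toWord = Z ++ flat m R ++ FreeGroup.invRev Z := by
  have hall : IsRed (Z ++ R ++ FreeGroup.invRev Z) := by
    rw [← hdec]; exact isRed_toWord g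
  rw [List.append_assoc] at hall
  obtain ⟨hZ, hmid, hbd1⟩ := List.isChain_append.1 hall
  obtain ⟨hRr, hIZ, hbd2⟩ := List.isChain_append.1 hmid
  have hgmk : g = FreeGroup.mk Z * FreeGroup.mk R * (FreeGroup.mk Z)⁻¹ := by
    rw [FreeGroup.inv_mk, FreeGroup.mul_mk, FreeGroup.mul_mk, ← hdec, FreeGroup.mk_toWord]
  intro m hm
  have hpow : g ^ m = FreeGroup.mk (Z ++ flat m R ++ FreeGroup.invRev Z) := by
    rw [hgmk, conj_pow, FreeGroup.pow_mk, FreeGroup.inv_mk, FreeGroup.mul_mk,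
      FreeGroup.mul_mk]
    rfl
  rw [hpow]
  apply toWord_mk_of_isRed
  rw [List.append_assoc]
  refine List.isChain_append.2 ⟨hZ, List.isChain_append.2
    ⟨flat_isRed hRred hRbd m, hIZ, ?_⟩, ?_⟩
  · intro x hx y hy
    rw [flat_getLast? hR hm] at hx
    exact hbd2 x hx y hy
  · intro x hx y hy
    rw [List.head?_append_of_ne_nil _ (flat_ne_nil hR hm), flat_head? hR hm] at hy
    refine hbd1 x hx y ?_
    rw [List.head?_append_of_ne_nil _ hR]
    exact hy

/-- Splitting a mixed word at a letter change. -/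
theorem split_mixed : ∀ (R : List Lt), (∃ x ∈ R, ∃ y ∈ R, x.1 ≠ y.1) →
    ∃ P S : List Lt, R = P ++ S ∧ P ≠ [] ∧ S ≠ [] ∧
      ∀ x ∈ P.getLast?, ∀ y ∈ S.head?, x.1 ≠ y.1 := by
  intro R
  induction R with
  | nil => rintro ⟨x, hx, _⟩; simp at hx
  | cons x t ih =>
    intro hmix
    cases t with
    | nil =>
      exfalso
      obtain ⟨u, hu, v, hv, huv⟩ := hmix
      simp at hu hv
      rw [hu, hv] at huv
      exact huv rfl
    | cons y s =>
      by_cases hxy : x.1 = y.1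
      · -- recurse on t = y :: s
        have hmix' : ∃ u ∈ y :: s, ∃ v ∈ y :: s, u.1 ≠ v.1 := by
          by_contra hall
          push_neg at hall
          obtain ⟨u, hu, v, hv, huv⟩ := hmix
          have key : ∀ z ∈ x :: y :: s, z.1 = x.1 := by
            intro z hz
            rcases List.mem_cons.1 hz with rfl | hz'
            · rfl
            · rw [hall z hz' y List.mem_cons_self, hxy]
          exact huv ((key u hu).trans (key v hv).symm)
        obtain ⟨P', S', hPS, hP', hS', hb⟩ := ih hmix'
        refine ⟨x :: P', S', by rw [List.cons_append, ← hPS], List.cons_ne_nil _ _, hS', ?_⟩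
        intro u hu v hv
        rw [show x :: P' = [x] ++ P' from rfl,
          List.getLast?_append_of_ne_nil _ hP'] at hu
        exact hb u hu v hv
      · exact ⟨[x], y :: s, rfl, List.cons_ne_nil _ _, List.cons_ne_nil _ _, by
          intro u hu v hv
          simp at hu hv
          rw [← hu, ← hv]
          exact hxy⟩

/-- A pure reduced word is a constant replicate. -/
theorem pure_replicate : ∀ (R : List Lt) (x₀ : Lt), IsRed (x₀ :: R) →
    (∀ y ∈ x₀ :: R, y.1 = x₀.1) → x₀ :: R = List.replicate (R.length + 1) x₀ := by
  intro R
  induction R with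
  | nil => intro x₀ _ _; rfl
  | cons y t ih =>
    intro x₀ hred hall
    have h1 : ¬ Cancels x₀ y := (List.isChain_cons_cons.1 hred).1
    have hy1 : y.1 = x₀.1 := hall y (by simp)
    have hy2 : y.2 = x₀.2 := by
      by_contra h2
      exact h1 ⟨hy1.symm, by cases hx : x₀.2 <;> cases hy : y.2 <;> simp_all⟩
    have hyx : y = x₀ := by
      rcases y with ⟨c, d⟩; rcases x₀ with ⟨c', d'⟩; simp_all
    subst hyx
    have hall' : ∀ z ∈ y :: t, z.1 = y.1 := by
      intro z hz
      exact hall z (List.mem_cons_of_mem _ hz)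
    have hih := ih y hred.tail hall'
    rw [List.length_cons, List.replicate_succ, ← hih]




/-! ### Exponent sums -/

def sg (c : Fin 2) : G →* Multiplicative ℤ :=
  FreeGroup.lift (fun i => Multiplicative.ofAdd (if i = c then 1 else 0))

def ex (c : Fin 2) (g : G) : ℤ := Multiplicative.toAdd (sg c g)

theorem ex_of (c i : Fin 2) : ex c (FreeGroup.of i) = if i = c then 1 else 0 := by
  simp [ex, sg, FreeGroup.lift_apply_of]

theorem ex_one (c : Fin 2) : ex c 1 = 0 := by simp [ex]

theorem ex_mul (c : Fin 2) (g h : G) : ex c (g * h) = ex c g + ex c h := by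
  simp [ex, map_mul]

theorem ex_inv (c : Fin 2) (g : G) : ex c g⁻¹ = - ex c g := by
  simp [ex, map_inv]

theorem ex_zpow (c : Fin 2) (g : G) (n : ℤ) : ex c (g ^ n) = n * ex c g := by
  simp [ex, map_zpow, toAdd_zpow]

theorem ex_pow (c : Fin 2) (g : G) (n : ℕ) : ex c (g ^ n) = n * ex c g := by
  simp [ex, map_pow, toAdd_pow]

theorem ex_conj (c : Fin 2) (z g : G) : ex c (z * g * z⁻¹) = ex c g := by
  rw [ex_mul, ex_mul, ex_inv]; ring

theorem mk_cons (l : Lt) (w : List Lt) :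
    FreeGroup.mk (l :: w) = FreeGroup.mk [l] * FreeGroup.mk w := by
  rw [FreeGroup.mul_mk]; rfl

theorem mk_single_true (i : Fin 2) : FreeGroup.mk [(i, true)] = FreeGroup.of i := rfl

theorem mk_single_false (i : Fin 2) : FreeGroup.mk [(i, false)] = (FreeGroup.of i)⁻¹ := by
  rw [show FreeGroup.of i = FreeGroup.mk [(i, true)] from rfl, FreeGroup.inv_mk]
  rfl

theorem ex_mk_parity (c : Fin 2) : ∀ w : List Lt,
    ((ex c (FreeGroup.mk w) : ℤ) : ZMod 2) = (w.countP (fun x => x.1 = c) : ZMod 2) := by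
  intro w
  induction w with
  | nil =>
    rw [show FreeGroup.mk ([] : List Lt) = 1 from (FreeGroup.one_eq_mk).symm]
    simp [ex_one]
  | cons l t ih =>
    rw [mk_cons, ex_mul, List.countP_cons]
    push_cast
    rw [ih]
    rcases l with ⟨i, b⟩
    cases b
    · rw [mk_single_false, ex_inv, ex_of]
      by_cases hc : i = c
      · simp only [hc, if_true, if_pos]
        push_cast
        rw [show ((-1 : ZMod 2)) = 1 by decide]
        simp [add_comm]
      · simp [hc]
    · rw [mk_single_true, ex_of]
      by_cases hc : i = c
      · simp only [hc, if_true, if_pos]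
        push_cast
        simp [add_comm]
      · simp [hc]

/-- decomposition of exponents along a basis -/
theorem dec_hom (τ : G →* Multiplicative ℤ) (v : Fin 2 → G) (g : G) :
    τ (FreeGroup.lift v g) = τ (v 0) ^ ex 0 g * τ (v 1) ^ ex 1 g := by
  induction g using FreeGroup.induction_on with
  | C1 => simp [ex_one]
  | of x =>
    have h : ∀ i : Fin 2, τ (FreeGroup.lift v (FreeGroup.of i)) =
        τ (v 0) ^ ex 0 (FreeGroup.of i) * τ (v 1) ^ ex 1 (FreeGroup.of i) := by
      intro i
      fin_cases i <;> simp [FreeGroup.lift_apply_of, ex_of]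
    exact h x
  | inv_of x _ =>
    have h : ∀ i : Fin 2, τ (FreeGroup.lift v (FreeGroup.of i)⁻¹) =
        τ (v 0) ^ ex 0 (FreeGroup.of i)⁻¹ * τ (v 1) ^ ex 1 (FreeGroup.of i)⁻¹ := by
      intro i
      fin_cases i <;>
        simp [map_inv, FreeGroup.lift_apply_of, ex_inv, ex_of, zpow_neg] <;> group
    exact h x
  | mul x y hx hy =>
    rw [map_mul, map_mul, hx, hy, ex_mul, ex_mul, zpow_add, zpow_add]
    exact mul_mul_mul_comm _ _ _ _

theorem toAdd_dec (τ : G →* Multiplicative ℤ) (v : Fin 2 → G) (g : G) :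
    Multiplicative.toAdd (τ (FreeGroup.lift v g)) =
      ex 0 g * Multiplicative.toAdd (τ (v 0)) + ex 1 g * Multiplicative.toAdd (τ (v 1)) := by
  rw [dec_hom, toAdd_mul, toAdd_zpow, toAdd_zpow, smul_eq_mul, smul_eq_mul]

theorem sg_eq (c : Fin 2) (g : G) : sg c g = Multiplicative.ofAdd (ex c g) := rfl

theorem ex_dec (c : Fin 2) (v : Fin 2 → G) (g : G) :
    ex c (FreeGroup.lift v g) = ex 0 g * ex c (v 0) + ex 1 g * ex c (v 1) :=
  toAdd_dec (sg c) v g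

/-- A primitive element cannot have both exponent sums even. -/
theorem basis_not_both_even (v : Fin 2 → G) (hv : Function.Surjective (FreeGroup.lift v))
    (h0 : 2 ∣ ex 0 (v 0)) (h1 : 2 ∣ ex 1 (v 0)) : False := by
  obtain ⟨g, hg⟩ := hv (FreeGroup.of 0)
  obtain ⟨g', hg'⟩ := hv (FreeGroup.of 1)
  have e1 : ex 0 g * ex 0 (v 0) + ex 1 g * ex 0 (v 1) = 1 := by
    rw [← ex_dec 0 v g, hg, ex_of]; simp
  have e2 : ex 0 g * ex 1 (v 0) + ex 1 g * ex 1 (v 1) = 0 := by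
    rw [← ex_dec 1 v g, hg, ex_of]; simp
  have e3 : ex 0 g' * ex 0 (v 0) + ex 1 g' * ex 0 (v 1) = 0 := by
    rw [← ex_dec 0 v g', hg', ex_of]; simp
  have e4 : ex 0 g' * ex 1 (v 0) + ex 1 g' * ex 1 (v 1) = 1 := by
    rw [← ex_dec 1 v g', hg', ex_of]; simp
  obtain ⟨u₁, hu⟩ := h0
  obtain ⟨w₁, hw⟩ := h1
  rw [hu] at e1 e3
  rw [hw] at e2 e4
  have h5 : (ex 0 g * (2*u₁) + ex 1 g * ex 0 (v 1)) * (ex 0 g' * (2*w₁) + ex 1 g' * ex 1 (v 1))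
      - (ex 0 g * (2*w₁) + ex 1 g * ex 1 (v 1)) * (ex 0 g' * (2*u₁) + ex 1 g' * ex 0 (v 1))
      = 1 := by
    rw [e1, e2, e3, e4]; norm_num
  have h6 : 2 * (u₁ * (ex 0 g) * (ex 1 g') * (ex 1 (v 1))
      + w₁ * (ex 1 g) * (ex 0 g') * (ex 0 (v 1))
      - w₁ * (ex 0 g) * (ex 1 g') * (ex 0 (v 1))
      - u₁ * (ex 1 g) * (ex 0 g') * (ex 1 (v 1))) = 1 := by
    linear_combination h5
  omega

/-! ### Small free groups -/

theorem freeGroup_fin0_eq_one (g : FreeGroup (Fin 0)) : g = 1 := by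
  induction g using FreeGroup.induction_on with
  | C1 => rfl
  | of x => exact x.elim0
  | inv_of x _ => exact x.elim0
  | mul x y hx hy => rw [hx, hy, one_mul]

theorem freeGroup_fin1_gen (g : FreeGroup (Fin 1)) :
    ∃ n : ℤ, g = (FreeGroup.of 0) ^ n := by
  induction g using FreeGroup.induction_on with
  | C1 => exact ⟨0, rfl⟩
  | of x => exact ⟨1, by rw [zpow_one]; congr; exact Subsingleton.elim _ _⟩
  | inv_of x h =>
    obtain ⟨n, hn⟩ := h
    exact ⟨-n, by rw [hn, ← zpow_neg]⟩
  | mul x y hx hy =>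
    obtain ⟨n, hn⟩ := hx
    obtain ⟨m, hm⟩ := hy
    exact ⟨n + m, by rw [hn, hm, zpow_add]⟩

/-! ### Rank facts -/

def HasRank' (H : Subgroup G) (r : ℕ) : Prop := Nonempty (FreeGroup (Fin r) ≃* H)

theorem hasRank_bot_zero {r : ℕ} (h : HasRank' ⊥ r) : r = 0 := by
  obtain ⟨e⟩ := h
  by_contra hr
  have h0 : (0 : ℕ) < r := Nat.pos_of_ne_zero hr
  set i : Fin r := ⟨0, h0⟩
  have h1 : e (FreeGroup.of i) = e 1 := by
    apply Subtype.ext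
    have := (e (FreeGroup.of i)).2
    rw [Subgroup.mem_bot] at this
    rw [this, map_one]
    rfl
  exact FreeGroup.of_ne_one i (e.injective h1)

theorem comm_of_hasRank_le_one {S : Subgroup G} {r : ℕ} (h : HasRank' S r) (hr : r ≤ 1)
    {x y : G} (hx : x ∈ S) (hy : y ∈ S) : x * y = y * x := by
  obtain ⟨e⟩ := h
  interval_cases r
  · have hall : ∀ z : G, z ∈ S → z = 1 := by
      intro z hz
      have h1 : e.symm ⟨z, hz⟩ = 1 := freeGroup_fin0_eq_one _
      have h2 : (⟨z, hz⟩ : S) = e 1 := by rw [← h1, MulEquiv.apply_symm_apply]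
      rw [map_one] at h2
      exact congrArg Subtype.val h2
    rw [hall x hx, hall y hy]
  · set wgen : S := e (FreeGroup.of 0)
    have hpow : ∀ z : G, ∀ hz : z ∈ S, ∃ n : ℤ, (⟨z, hz⟩ : S) = wgen ^ n := by
      intro z hz
      obtain ⟨n, hn⟩ := freeGroup_fin1_gen (e.symm ⟨z, hz⟩)
      refine ⟨n, ?_⟩
      have : e (e.symm ⟨z, hz⟩) = e ((FreeGroup.of 0) ^ n) := by rw [hn]
      rw [MulEquiv.apply_symm_apply, map_zpow] at this
      exact this
    obtain ⟨n, hn⟩ := hpow x hx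
    obtain ⟨m, hm⟩ := hpow y hy
    have : (⟨x, hx⟩ : S) * ⟨y, hy⟩ = ⟨y, hy⟩ * ⟨x, hx⟩ := by
      rw [hn, hm, ← zpow_add, ← zpow_add, add_comm]
    have := congrArg Subtype.val this
    simpa using this

theorem hasRank_congr {S T : Subgroup G} (h : S = T) {r : ℕ} (hS : HasRank' S r) :
    HasRank' T r := by
  obtain ⟨e⟩ := hS
  exact ⟨e.trans (MulEquiv.subgroupCongr h)⟩

/-- A free basis of `G` has exactly two elements. -/
theorem basis_card {m : ℕ} (v : Fin m → G) (hv : Function.Bijective (FreeGroup.lift v)) :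
    m = 2 := by
  set Q := Multiplicative (ZMod 2)
  let e : FreeGroup (Fin m) ≃* G := MulEquiv.ofBijective _ hv
  let E2 : (FreeGroup (Fin m) →* Q) ≃ (G →* Q) :=
    { toFun := fun φ => φ.comp e.symm.toMonoidHom
      invFun := fun ψ => ψ.comp e.toMonoidHom
      left_inv := fun φ => by ext x; simp
      right_inv := fun ψ => by ext x; simp }
  let E : (Fin m → Q) ≃ (Fin 2 → Q) :=
    (FreeGroup.lift.trans E2).trans FreeGroup.lift.symm
  have hcard := Fintype.card_congr E
  rw [Fintype.card_fun, Fintype.card_fun] at hcard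
  have hQ : Fintype.card Q = 2 := rfl
  rw [hQ] at hcard
  simpa using Nat.pow_right_injective (le_refl 2) hcard

/-! ### Freeness via block substitution -/

section Blocks

variable (bw : Lt → List Lt)

theorem flatMap_isRed (h1 : ∀ l, bw l ≠ []) (h3 : ∀ l, IsRed (bw l))
    (h4 : ∀ x y : Lt, ¬ Cancels x y →
      ∀ u ∈ (bw x).getLast?, ∀ z ∈ (bw y).head?, ¬ Cancels u z) :
    ∀ w, IsRed w → IsRed (w.flatMap bw) := by
  intro w
  induction w with
  | nil => intro _; exact List.isChain_nil
  | cons x t ih =>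
    intro h
    rw [List.flatMap_cons]
    refine List.isChain_append.2 ⟨h3 x, ih h.tail, ?_⟩
    intro u hu z hz
    cases t with
    | nil => simp at hz
    | cons y s =>
      rw [List.flatMap_cons, List.head?_append_of_ne_nil _ (h1 y)] at hz
      exact h4 x y (List.isChain_cons_cons.1 h).1 u hu z hz

theorem lift_flatMap (f : Fin 2 → G) (hf : ∀ i, f i = FreeGroup.mk (bw (i, true)))
    (h2 : ∀ l : Lt, bw (l.1, !l.2) = FreeGroup.invRev (bw l)) :
    ∀ w : List Lt, FreeGroup.lift f (FreeGroup.mk w) = FreeGroup.mk (w.flatMap bw) := by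
  intro w
  induction w with
  | nil => rw [← FreeGroup.one_eq_mk, map_one, List.flatMap_nil, ← FreeGroup.one_eq_mk]
  | cons l t ih =>
    rw [mk_cons, map_mul, ih, List.flatMap_cons]
    rcases l with ⟨i, b⟩
    cases b
    · rw [mk_single_false, map_inv, FreeGroup.lift_apply_of, hf i, FreeGroup.inv_mk,
        ← FreeGroup.mul_mk]
      have h := h2 ((i : Fin 2), false)
      simp only [Bool.not_false] at h
      rw [h, FreeGroup.invRev_invRev]
    · rw [mk_single_true, FreeGroup.lift_apply_of, hf i, ← FreeGroup.mul_mk]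

theorem lift_inj_of_blocks (f : Fin 2 → G) (hf : ∀ i, f i = FreeGroup.mk (bw (i, true)))
    (h1 : ∀ l, bw l ≠ []) (h2 : ∀ l : Lt, bw (l.1, !l.2) = FreeGroup.invRev (bw l))
    (h3 : ∀ l, IsRed (bw l))
    (h4 : ∀ x y : Lt, ¬ Cancels x y →
      ∀ u ∈ (bw x).getLast?, ∀ z ∈ (bw y).head?, ¬ Cancels u z) :
    Function.Injective (FreeGroup.lift f) := by
  rw [injective_iff_map_eq_one]
  intro g hg
  have hw := lift_flatMap bw f hf h2 g.toWord
  rw [FreeGroup.mk_toWord, hg] at hw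
  have hred : IsRed (g.toWord.flatMap bw) :=
    flatMap_isRed bw h1 h3 h4 _ (by
      rw [← FreeGroup.reduce_toWord g]
      exact isRed_reduce _)
  have hnil : g.toWord.flatMap bw = [] := by
    have := congrArg FreeGroup.toWord hw
    rw [FreeGroup.toWord_one, toWord_mk_of_isRed hred] at this
    exact this.symm
  have : g.toWord = [] := by
    cases hcw : g.toWord with
    | nil => rfl
    | cons x t =>
      exfalso
      rw [hcw, List.flatMap_cons] at hnil
      exact h1 x (List.append_eq_nil_iff.1 hnil).1
  exact FreeGroup.toWord_eq_nil_iff.1 this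

end Blocks


/-! ### Specific elements and membership facts -/

theorem ha2 : (a ^ 2 : G) = FreeGroup.mk [(0, true), (0, true)] := by
  have h : (a ^ 2 : G).toWord = [(0, true), (0, true)] := by
    rw [show (a : G) = FreeGroup.of 0 from rfl, FreeGroup.toWord_of_pow]
    rfl
  rw [← FreeGroup.mk_toWord (x := a ^ 2), h]

theorem hb2 : (b ^ 2 : G) = FreeGroup.mk [(1, true), (1, true)] := by
  have h : (b ^ 2 : G).toWord = [(1, true), (1, true)] := by
    rw [show (b : G) = FreeGroup.of 1 from rfl, FreeGroup.toWord_of_pow]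
    rfl
  rw [← FreeGroup.mk_toWord (x := b ^ 2), h]

theorem hY : (b ^ 2 * a ^ 2 * b ^ 2 : G) =
    FreeGroup.mk [(1, true), (1, true), (0, true), (0, true), (1, true), (1, true)] := by
  rw [hb2, ha2, FreeGroup.mul_mk, FreeGroup.mul_mk]
  rfl

theorem hY' : (a ^ 2 * b ^ 2 * a ^ 2 : G) =
    FreeGroup.mk [(0, true), (0, true), (1, true), (1, true), (0, true), (0, true)] := by
  rw [hb2, ha2, FreeGroup.mul_mk, FreeGroup.mul_mk]
  rfl

theorem ha2w : (a ^ 2 : G).toWord = [(0, true), (0, true)] := by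
  rw [ha2, FreeGroup.toWord_mk]; decide

theorem hb2w : (b ^ 2 : G).toWord = [(1, true), (1, true)] := by
  rw [hb2, FreeGroup.toWord_mk]; decide

theorem hYw : (b ^ 2 * a ^ 2 * b ^ 2 : G).toWord =
    [(1, true), (1, true), (0, true), (0, true), (1, true), (1, true)] := by
  rw [hY, FreeGroup.toWord_mk]; decide

theorem hY'w : (a ^ 2 * b ^ 2 * a ^ 2 : G).toWord =
    [(0, true), (0, true), (1, true), (1, true), (0, true), (0, true)] := by
  rw [hY', FreeGroup.toWord_mk]; decide

abbrev HH : Subgroup G := Subgroup.closure {a ^ 2, b ^ 2 * a ^ 2 * b ^ 2}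
abbrev HH' : Subgroup G := Subgroup.closure {b ^ 2, a ^ 2 * b ^ 2 * a ^ 2}

theorem HH_le_trace : HH ≤ traceGroup stepH symH 0 := by
  rw [Subgroup.closure_le]
  rintro g hg
  simp only [Set.mem_insert_iff, Set.mem_singleton_iff] at hg
  rcases hg with rfl | rfl
  · show evalW stepH (a ^ 2 : G).toWord 0 = some 0
    rw [ha2w]; decide
  · show evalW stepH (b ^ 2 * a ^ 2 * b ^ 2 : G).toWord 0 = some 0
    rw [hYw]; decide

theorem HH'_le_trace : HH' ≤ traceGroup stepH' symH' 0 := by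
  rw [Subgroup.closure_le]
  rintro g hg
  simp only [Set.mem_insert_iff, Set.mem_singleton_iff] at hg
  rcases hg with rfl | rfl
  · show evalW stepH' (b ^ 2 : G).toWord 0 = some 0
    rw [hb2w]; decide
  · show evalW stepH' (a ^ 2 * b ^ 2 * a ^ 2 : G).toWord 0 = some 0
    rw [hY'w]; decide

theorem countP_replicate_eq (n : ℕ) (i : Fin 2) (s : Bool) (c : Fin 2) (h : i = c) :
    (List.replicate n (i, s)).countP (fun x => x.1 = c) = n := by
  subst h
  induction n with
  | zero => rfl
  | succ n ih => rw [List.replicate_succ, List.countP_cons]; simp [ih]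

theorem a_pow_even (n : ℕ) (h : (a : G) ^ n ∈ HH) : 2 ∣ n := by
  have htr : evalW stepH ((a : G) ^ n).toWord 0 = some 0 := HH_le_trace h
  rw [show (a : G) = FreeGroup.of 0 from rfl, FreeGroup.toWord_of_pow] at htr
  have hp := trace_parity stepH paH 0 hpaH _ _ _ htr
  rw [countP_replicate_eq n 0 true 0 rfl] at hp
  rw [left_eq_add] at hp
  exact (ZMod.natCast_eq_zero_iff n 2).1 hp

theorem b_pow_even (n : ℕ) (h : (b : G) ^ n ∈ HH') : 2 ∣ n := by
  have htr : evalW stepH' ((b : G) ^ n).toWord 0 = some 0 := HH'_le_trace h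
  rw [show (b : G) = FreeGroup.of 1 from rfl, FreeGroup.toWord_of_pow] at htr
  have hp := trace_parity stepH' paH 1 hpbH' _ _ _ htr
  rw [countP_replicate_eq n 1 true 1 rfl] at hp
  rw [left_eq_add] at hp
  exact (ZMod.natCast_eq_zero_iff n 2).1 hp

theorem a_zpow_even (n : ℤ) (h : (a : G) ^ n ∈ HH) : 2 ∣ n := by
  rcases n with n | n
  · rw [Int.ofNat_eq_coe, zpow_natCast] at h
    rw [Int.ofNat_eq_coe]
    exact_mod_cast a_pow_even n h
  · rw [zpow_negSucc] at h
    obtain ⟨m, hm⟩ := a_pow_even (n + 1) ((inv_mem_iff (x := (a : G) ^ (n+1))).1 h)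
    exact ⟨-m, by rw [Int.negSucc_eq]; omega⟩

theorem b_zpow_even (n : ℤ) (h : (b : G) ^ n ∈ HH') : 2 ∣ n := by
  rcases n with n | n
  · rw [Int.ofNat_eq_coe, zpow_natCast] at h
    rw [Int.ofNat_eq_coe]
    exact_mod_cast b_pow_even n h
  · rw [zpow_negSucc] at h
    obtain ⟨m, hm⟩ := b_pow_even (n + 1) ((inv_mem_iff (x := (b : G) ^ (n+1))).1 h)
    exact ⟨-m, by rw [Int.negSucc_eq]; omega⟩

/-! ### Intersections with cyclic prefix subgroups -/

theorem HH_inf_a : HH ⊓ Subgroup.closure {(a : G)} = Subgroup.closure {(a : G) ^ 2} := by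
  apply le_antisymm
  · rintro g ⟨hgH, hga⟩
    obtain ⟨n, hn⟩ := Subgroup.mem_closure_singleton.1 hga
    obtain ⟨m, hm⟩ := a_zpow_even n (by rw [hn]; exact hgH)
    apply Subgroup.mem_closure_singleton.2
    refine ⟨m, ?_⟩
    rw [← hn, hm, ← zpow_natCast (a : G) 2, ← zpow_mul]
    norm_num
  · rw [Subgroup.closure_le]
    rintro g hg
    rw [Set.mem_singleton_iff] at hg
    subst hg
    refine ⟨Subgroup.subset_closure (Set.mem_insert _ _), ?_⟩
    apply Subgroup.mem_closure_singleton.2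
    exact ⟨2, by rw [zpow_two, pow_two]⟩

theorem HH'_inf_b : HH' ⊓ Subgroup.closure {(b : G)} = Subgroup.closure {(b : G) ^ 2} := by
  apply le_antisymm
  · rintro g ⟨hgH, hgb⟩
    obtain ⟨n, hn⟩ := Subgroup.mem_closure_singleton.1 hgb
    obtain ⟨m, hm⟩ := b_zpow_even n (by rw [hn]; exact hgH)
    apply Subgroup.mem_closure_singleton.2
    refine ⟨m, ?_⟩
    rw [← hn, hm, ← zpow_natCast (b : G) 2, ← zpow_mul]
    norm_num
  · rw [Subgroup.closure_le]
    rintro g hg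
    rw [Set.mem_singleton_iff] at hg
    subst hg
    refine ⟨Subgroup.subset_closure (Set.mem_insert _ _), ?_⟩
    apply Subgroup.mem_closure_singleton.2
    exact ⟨2, by rw [zpow_two, pow_two]⟩

/-! ### Rank witnesses -/

def botEquiv : FreeGroup (Fin 0) ≃* (⊥ : Subgroup G) where
  toFun := fun _ => 1
  invFun := fun _ => 1
  left_inv := fun g => (freeGroup_fin0_eq_one g).symm
  right_inv := fun x => by
    apply Subtype.ext
    have := x.2
    rw [Subgroup.mem_bot] at this
    simp [this]
  map_mul' := by intros; simp

theorem hasRank_bot : HasRank' (⊥ : Subgroup G) 0 := ⟨botEquiv⟩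

theorem hasRank_closure_single (g : G) (c : Fin 2) (hc : ex c g ≠ 0) :
    HasRank' (Subgroup.closure {g}) 1 := by
  have hinj : Function.Injective (FreeGroup.lift (fun _ : Fin 1 => g)) := by
    rw [injective_iff_map_eq_one]
    intro x hx
    obtain ⟨n, rfl⟩ := freeGroup_fin1_gen x
    rw [map_zpow, FreeGroup.lift_apply_of] at hx
    have : ex c (g ^ n) = 0 := by rw [hx, ex_one]
    rw [ex_zpow] at this
    rcases mul_eq_zero.1 this with h | h
    · rw [h, zpow_zero]
    · exact absurd h hc
  have hrange : (FreeGroup.lift (fun _ : Fin 1 => g)).range = Subgroup.closure {g} := by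
    rw [FreeGroup.range_lift_eq_closure, Set.range_const]
  exact ⟨(MonoidHom.ofInjective hinj).trans (MulEquiv.subgroupCongr hrange)⟩

/-! ### Freeness of the generating pairs -/

def bwH : Lt → List Lt := fun l =>
  match l.1.val, l.2 with
  | 0, true => [(0, true), (0, true)]
  | 0, false => [(0, false), (0, false)]
  | 1, true => [(1, true), (1, true), (0, true), (0, true), (1, true), (1, true)]
  | _, _ => [(1, false), (1, false), (0, false), (0, false), (1, false), (1, false)]

def bwH' : Lt → List Lt := fun l =>
  match l.1.val, l.2 with
  | 0, true => [(1, true), (1, true)]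
  | 0, false => [(1, false), (1, false)]
  | 1, true => [(0, true), (0, true), (1, true), (1, true), (0, true), (0, true)]
  | _, _ => [(0, false), (0, false), (1, false), (1, false), (0, false), (0, false)]

theorem range_pair (x y : G) : Set.range ![x, y] = {x, y} :=
  Matrix.range_cons_cons_empty x y _

theorem hasRank_HH : HasRank' HH 2 := by
  have hf : ∀ i : Fin 2, (![a ^ 2, b ^ 2 * a ^ 2 * b ^ 2] : Fin 2 → G) i =
      FreeGroup.mk (bwH (i, true)) := by
    intro i
    fin_cases i
    · exact ha2
    · exact hY
  have hinj := lift_inj_of_blocks bwH ![a ^ 2, b ^ 2 * a ^ 2 * b ^ 2] hf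
    (by decide) (by decide) (by decide) (by decide)
  have hrange : (FreeGroup.lift ![a ^ 2, b ^ 2 * a ^ 2 * b ^ 2]).range = HH := by
    rw [FreeGroup.range_lift_eq_closure, range_pair]
  exact ⟨(MonoidHom.ofInjective hinj).trans (MulEquiv.subgroupCongr hrange)⟩

theorem hasRank_HH' : HasRank' HH' 2 := by
  have hf : ∀ i : Fin 2, (![b ^ 2, a ^ 2 * b ^ 2 * a ^ 2] : Fin 2 → G) i =
      FreeGroup.mk (bwH' (i, true)) := by
    intro i
    fin_cases i
    · exact hb2
    · exact hY'
  have hinj := lift_inj_of_blocks bwH' ![b ^ 2, a ^ 2 * b ^ 2 * a ^ 2] hf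
    (by decide) (by decide) (by decide) (by decide)
  have hrange : (FreeGroup.lift ![b ^ 2, a ^ 2 * b ^ 2 * a ^ 2]).range = HH' := by
    rw [FreeGroup.range_lift_eq_closure, range_pair]
  exact ⟨(MonoidHom.ofInjective hinj).trans (MulEquiv.subgroupCongr hrange)⟩

/-! ### Core lemma: no power of a primitive element lies in both subgroups -/

theorem mk_decomp {g : G} {Z R : List Lt} (hdec : g.toWord = Z ++ R ++ FreeGroup.invRev Z) :
    g = FreeGroup.mk Z * FreeGroup.mk R * (FreeGroup.mk Z)⁻¹ := by
  rw [FreeGroup.inv_mk, FreeGroup.mul_mk, FreeGroup.mul_mk, ← hdec, FreeGroup.mk_toWord]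

theorem first_step {V : Type} (step : V → Lt → Option V) {S : List Lt} (hS : S ≠ [])
    {u v : V} (h : evalW step S u = some v) :
    ∃ l w, l ∈ S.head? ∧ step u l = some w := by
  cases S with
  | nil => exact absurd rfl hS
  | cons l t =>
    cases hst : step u l with
    | none => rw [show evalW step (l::t) u = (step u l).bind _ from rfl, hst] at h; simp at h
    | some w => exact ⟨l, w, by simp, hst⟩

theorem last_step {V : Type} (step : V → Lt → Option V) {P : List Lt} (hP : P ≠ [])
    {u v : V} (h : evalW step P u = some v) :
    ∃ m l, l ∈ P.getLast? ∧ step m l = some v := by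
  rcases List.eq_nil_or_concat P with rfl | ⟨P₀, l, rfl⟩
  · exact absurd rfl hP
  · rw [List.concat_eq_append] at h ⊢
    obtain ⟨y, h1, h2⟩ := trace_split step h
    refine ⟨y, l, ?_, ?_⟩
    · rw [List.getLast?_append_of_ne_nil _ (List.cons_ne_nil _ _)]
      simp
    · cases hst : step y l with
      | none =>
        rw [show evalW step [l] y = (step y l).bind _ from rfl, hst] at h2
        simp at h2
      | some w =>
        rw [show evalW step [l] y = (step y l).bind _ from rfl, hst] at h2
        have hwv : w = v := by simpa [evalW] using h2
        rw [hwv]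

theorem no_primitive_power (v : Fin 2 → G) (hv : Function.Bijective (FreeGroup.lift v))
    (k : ℤ) (hk : k ≠ 0) (hmem : v 0 ^ k ∈ HH ⊓ HH') : False := by
  classical
  set q : G := if 0 < k then v 0 else (v 0)⁻¹ with hqdef
  have hpar : ¬ (2 ∣ ex 0 q ∧ 2 ∣ ex 1 q) := by
    rintro ⟨h0, h1⟩
    by_cases hk0 : 0 < k
    · rw [hqdef, if_pos hk0] at h0 h1
      exact basis_not_both_even v hv.2 h0 h1
    · rw [hqdef, if_neg hk0, ex_inv, dvd_neg] at h0 h1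
      exact basis_not_both_even v hv.2 h0 h1
  set m : ℕ := 3 * k.natAbs with hmdef
  have hkabs : 1 ≤ k.natAbs := by
    rcases Int.natAbs_eq_zero.not.2 hk with h
    omega
  have hm3 : 3 ≤ m := by omega
  have hmZ : (m : ℤ) = 3 * |k| := by
    have h1 : ((3 * k.natAbs : ℕ) : ℤ) = 3 * (k.natAbs : ℤ) := by push_cast; ring
    rw [hmdef, h1, Int.natCast_natAbs]
  have hqm : q ^ m ∈ HH ⊓ HH' := by
    have hzp : q ^ (m : ℤ) = (v 0 ^ k) ^ (3 : ℤ) := by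
      by_cases hk0 : 0 < k
      · have h1 : (m : ℤ) = k * 3 := by rw [hmZ, abs_of_pos hk0]; ring
        rw [hqdef, if_pos hk0, h1, zpow_mul]
      · have hkneg : k < 0 := by omega
        have h1 : -(m : ℤ) = k * 3 := by rw [hmZ, abs_of_neg hkneg]; ring
        rw [hqdef, if_neg hk0, inv_zpow, ← zpow_neg, h1, zpow_mul]
    have h2 := Subgroup.zpow_mem (HH ⊓ HH') hmem (3 : ℤ)
    rw [← hzp] at h2
    rw [← zpow_natCast q m]
    exact h2
  obtain ⟨hqmH, hqmH'⟩ := hqm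
  have hq1 : q ≠ 1 := by
    intro h
    exact hpar ⟨by rw [h, ex_one]; exact dvd_zero 2, by rw [h, ex_one]; exact dvd_zero 2⟩
  obtain ⟨Z, R, hR, hRred, hRbd, hdec⟩ := cyc_exists (q.toWord.length) q le_rfl hq1
  have hql : ∀ c, ex c q = ex c (FreeGroup.mk R) := by
    intro c
    conv_lhs => rw [mk_decomp hdec]
    exact ex_conj c _ _
  have hpw := pow_toWord hdec hR hRred hRbd (m := m) (by omega)
  have htrH : evalW stepH ((q ^ m).toWord) 0 = some 0 := HH_le_trace hqmH
  have htrH' : evalW stepH' ((q ^ m).toWord) 0 = some 0 := HH'_le_trace hqmH'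
  by_cases hmix : ∃ x ∈ R, ∃ y ∈ R, x.1 ≠ y.1
  · -- mixed case: both exponent sums even, contradicting primitivity
    obtain ⟨P, S, hRPS, hP, hS, hbd⟩ := split_mixed R hmix
    obtain ⟨m', hm'⟩ : ∃ m', m = m' + 1 + 1 + 1 := ⟨m - 3, by omega⟩
    have hflat : flat m R = P ++ (S ++ (P ++ (S ++ (P ++ (S ++ flat m' R))))) := by
      rw [hm', flat_succ, flat_succ, flat_succ, hRPS]
      simp [List.append_assoc]
    rw [hpw, hflat] at htrH
    simp only [List.append_assoc] at htrH
    obtain ⟨s0, hZ0, h1⟩ := trace_split stepH htrH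
    obtain ⟨x1, hP1, h2⟩ := trace_split stepH h1
    obtain ⟨y1, hS1, h3⟩ := trace_split stepH h2
    obtain ⟨x2, hP2, h4⟩ := trace_split stepH h3
    obtain ⟨y2, hS2, h5⟩ := trace_split stepH h4
    obtain ⟨lo1, w1, hlo1, hso1⟩ := first_step stepH hS hS1
    obtain ⟨lo2, w2', hlo2, hso2⟩ := first_step stepH hS hS2
    obtain ⟨mi1, li1, hli1, hsi1⟩ := last_step stepH hP hP1
    obtain ⟨mi2, li2, hli2, hsi2⟩ := last_step stepH hP hP2
    have hBL1 := hBL mi1 li1 x1 lo1 w1 hsi1 hso1 (hbd li1 hli1 lo1 hlo1)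
    have hBL2 := hBL mi2 li2 x2 lo2 w2' hsi2 hso2 (hbd li2 hli2 lo2 hlo2)
    have hkey : ∀ (Pz : Fin 7 → ZMod 2) (c : Fin 2),
        (∀ u l vv, stepH u l = some vv → Pz vv = Pz u + (if l.1 = c then 1 else 0)) →
        Pz x1 = 0 → Pz x2 = 0 →
        ((R.countP (fun x => x.1 = c) : ℕ) : ZMod 2) = 0 := by
      intro Pz c hPz h1z h2z
      have t1 := trace_parity stepH Pz c hPz S x1 y1 hS1
      have t2 := trace_parity stepH Pz c hPz P y1 x2 hP2
      rw [t1, h1z, zero_add] at t2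
      rw [h2z] at t2
      rw [hRPS, List.countP_append]
      push_cast
      push_cast at t2
      linear_combination -t2
    have hc0 := hkey paH 0 hpaH hBL1.1 hBL2.1
    have hc1 := hkey pbH 1 hpbH hBL1.2 hBL2.2
    apply hpar
    constructor
    · rw [hql 0]
      apply (ZMod.intCast_zmod_eq_zero_iff_dvd _ 2).1
      rw [ex_mk_parity 0 R]
      exact_mod_cast hc0
    · rw [hql 1]
      apply (ZMod.intCast_zmod_eq_zero_iff_dvd _ 2).1
      rw [ex_mk_parity 1 R]
      exact_mod_cast hc1
  · -- pure case: R is a power of a single letter; impossible in the other graph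
    push_neg at hmix
    obtain ⟨x₀, t, rfl⟩ : ∃ x₀ t, R = x₀ :: t := by
      cases R with
      | nil => exact absurd rfl hR
      | cons x₀ t => exact ⟨x₀, t, rfl⟩
    have hall : ∀ y ∈ x₀ :: t, y.1 = x₀.1 := fun y hy => hmix y hy x₀ (by simp)
    have hrep : x₀ :: t = List.replicate (t.length + 1) x₀ := pure_replicate t x₀ hRred hall
    rcases x₀ with ⟨i, s⟩
    set N : ℕ := m * (t.length + 1) with hNdef
    have hN : 3 ≤ N := by
      have : 1 ≤ t.length + 1 := by omega
      calc 3 ≤ m := hm3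
        _ = m * 1 := (mul_one m).symm
        _ ≤ m * (t.length + 1) := Nat.mul_le_mul_left m this
    have hflat : flat m ((i, s) :: t) = List.replicate N (i, s) := by
      rw [hrep, flat_replicate]
    have hgen : ∀ (step' : Fin 7 → Lt → Option (Fin 7)), Sym step' →
        (∀ u s' vv, step' u (i, s') = some vv → qH vv = qH u + (if s' then 1 else -1)) →
        evalW step' ((q ^ m).toWord) 0 = some 0 → False := by
      intro step' hsym' hq' htr'
      rw [hpw, hflat] at htr'
      simp only [List.append_assoc] at htr'
      obtain ⟨y, hZ, h1⟩ := trace_split step' htr'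
      obtain ⟨y', hrepl, h2⟩ := trace_split step' h1
      have h3 := trace_invRev step' hsym' _ _ _ h2
      rw [FreeGroup.invRev_invRev] at h3
      have hyy : y = y' := by
        rw [hZ] at h3
        exact Option.some_inj.1 h3
      subst hyy
      have hh := trace_height step' qH i hq' N s y y hrepl
      rw [left_eq_add] at hh
      cases s
      · simp at hh
        omega
      · simp at hh
        omega
    fin_cases i
    · exact hgen stepH' symH' hqH' htrH'
    · exact hgen stepH symH hqH htrH

/-! ### The standard bases and the prefix subgroups -/

noncomputable def bas : Fin 2 → G := ![a, b]
noncomputable def bas' : Fin 2 → G := ![b, a]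

theorem bas_basis : IsFreeBasis bas := by
  have hlift : FreeGroup.lift bas = MonoidHom.id G := by
    apply FreeGroup.ext_hom
    intro i
    fin_cases i
    · rw [FreeGroup.lift_apply_of]; rfl
    · rw [FreeGroup.lift_apply_of]; rfl
  show Function.Bijective (FreeGroup.lift bas)
  rw [hlift]
  exact Function.bijective_id

theorem bas'_basis : IsFreeBasis bas' := by
  have hlift : (FreeGroup.lift bas').comp (FreeGroup.lift bas') = MonoidHom.id G := by
    apply FreeGroup.ext_hom
    intro i
    fin_cases i
    · show FreeGroup.lift bas' (FreeGroup.lift bas' (FreeGroup.of 0)) = FreeGroup.of 0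
      rw [FreeGroup.lift_apply_of, show bas' 0 = FreeGroup.of 1 from rfl, FreeGroup.lift_apply_of]
      rfl
    · show FreeGroup.lift bas' (FreeGroup.lift bas' (FreeGroup.of 1)) = FreeGroup.of 1
      rw [FreeGroup.lift_apply_of, show bas' 1 = FreeGroup.of 0 from rfl, FreeGroup.lift_apply_of]
      rfl
  have hinv : Function.Involutive (FreeGroup.lift bas') := fun g => by
    have := DFunLike.congr_fun hlift g
    simpa using this
  exact hinv.bijective

theorem prefix0 (v : Fin 2 → G) : prefixSubgroup v 0 = ⊥ := by
  have h : {j : Fin 2 | (j : ℕ) < 0} = ∅ := by ext j; simp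
  rw [prefixSubgroup, h, Set.image_empty, Subgroup.closure_empty]

theorem prefix1 (v : Fin 2 → G) : prefixSubgroup v 1 = Subgroup.closure {v 0} := by
  have h : {j : Fin 2 | (j : ℕ) < 1} = {0} := by
    ext j
    fin_cases j <;> simp
  rw [prefixSubgroup, h, Set.image_singleton]

theorem prefix2 (v : Fin 2 → G) (hv : Function.Bijective (FreeGroup.lift v)) :
    prefixSubgroup v 2 = ⊤ := by
  have h : {j : Fin 2 | (j : ℕ) < 2} = Set.univ := by
    ext j; simp [Fin.is_lt]; omega
  rw [prefixSubgroup, h, Set.image_univ, ← FreeGroup.range_lift_eq_closure]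
  exact MonoidHom.range_eq_top.2 hv.2

/-! ### The positive results -/

theorem ex_a2 : ex 0 ((a : G) ^ 2) ≠ 0 := by
  rw [ex_pow, show (a : G) = FreeGroup.of 0 from rfl, ex_of]
  norm_num

theorem ex_b2 : ex 1 ((b : G) ^ 2) ≠ 0 := by
  rw [ex_pow, show (b : G) = FreeGroup.of 1 from rfl, ex_of]
  norm_num

theorem echelon_HH : IsEchelon HH := by
  refine ⟨2, bas, bas_basis, ?_⟩
  intro i
  fin_cases i
  · refine ⟨1, 0, ?_, ?_, by omega⟩
    · show HasRank (HH ⊓ prefixSubgroup bas 0) 0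
      rw [prefix0, inf_bot_eq]
      exact hasRank_bot
    · show HasRank (HH ⊓ prefixSubgroup bas 1) 1
      rw [prefix1, show bas 0 = a from rfl, HH_inf_a]
      exact hasRank_closure_single _ 0 ex_a2
  · refine ⟨2, 1, ?_, ?_, by omega⟩
    · show HasRank (HH ⊓ prefixSubgroup bas 1) 1
      rw [prefix1, show bas 0 = a from rfl, HH_inf_a]
      exact hasRank_closure_single _ 0 ex_a2
    · show HasRank (HH ⊓ prefixSubgroup bas 2) 2
      rw [prefix2 bas bas_basis, inf_top_eq]
      exact hasRank_HH

theorem echelon_HH' : IsEchelon HH' := by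
  refine ⟨2, bas', bas'_basis, ?_⟩
  intro i
  fin_cases i
  · refine ⟨1, 0, ?_, ?_, by omega⟩
    · show HasRank (HH' ⊓ prefixSubgroup bas' 0) 0
      rw [prefix0, inf_bot_eq]
      exact hasRank_bot
    · show HasRank (HH' ⊓ prefixSubgroup bas' 1) 1
      rw [prefix1, show bas' 0 = b from rfl, HH'_inf_b]
      exact hasRank_closure_single _ 1 ex_b2
  · refine ⟨2, 1, ?_, ?_, by omega⟩
    · show HasRank (HH' ⊓ prefixSubgroup bas' 1) 1
      rw [prefix1, show bas' 0 = b from rfl, HH'_inf_b]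
      exact hasRank_closure_single _ 1 ex_b2
    · show HasRank (HH' ⊓ prefixSubgroup bas' 2) 2
      rw [prefix2 bas' bas'_basis, inf_top_eq]
      exact hasRank_HH'

/-! ### The negative result -/

theorem xel_mem : (a : G) ^ 2 * (b ^ 2 * a ^ 2 * b ^ 2) ∈ HH ⊓ HH' := by
  constructor
  · exact mul_mem (Subgroup.subset_closure (Set.mem_insert _ _))
      (Subgroup.subset_closure (Set.mem_insert_of_mem _ rfl))
  · have h : (a : G) ^ 2 * (b ^ 2 * a ^ 2 * b ^ 2) = (a ^ 2 * b ^ 2 * a ^ 2) * b ^ 2 := by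
      group
    rw [h]
    exact mul_mem (Subgroup.subset_closure (Set.mem_insert_of_mem _ rfl))
      (Subgroup.subset_closure (Set.mem_insert _ _))

theorem yel_mem : (b : G) ^ 2 * a ^ 2 * b ^ 2 * a ^ 2 ∈ HH ⊓ HH' := by
  constructor
  · exact mul_mem (Subgroup.subset_closure (Set.mem_insert_of_mem _ rfl))
      (Subgroup.subset_closure (Set.mem_insert _ _))
  · have h : (b : G) ^ 2 * a ^ 2 * b ^ 2 * a ^ 2 = b ^ 2 * (a ^ 2 * b ^ 2 * a ^ 2) := by
      group
    rw [h]
    exact mul_mem (Subgroup.subset_closure (Set.mem_insert _ _))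
      (Subgroup.subset_closure (Set.mem_insert_of_mem _ rfl))

theorem xy_ne : (a : G) ^ 2 * (b ^ 2 * a ^ 2 * b ^ 2) * (b ^ 2 * a ^ 2 * b ^ 2 * a ^ 2) ≠
    (b ^ 2 * a ^ 2 * b ^ 2 * a ^ 2) * ((a : G) ^ 2 * (b ^ 2 * a ^ 2 * b ^ 2)) := by
  have hx : (a : G) ^ 2 * (b ^ 2 * a ^ 2 * b ^ 2) = FreeGroup.mk
      [(0,true),(0,true),(1,true),(1,true),(0,true),(0,true),(1,true),(1,true)] := by
    rw [hY, ha2, FreeGroup.mul_mk]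
    rfl
  have hy : (b : G) ^ 2 * a ^ 2 * b ^ 2 * a ^ 2 = FreeGroup.mk
      [(1,true),(1,true),(0,true),(0,true),(1,true),(1,true),(0,true),(0,true)] := by
    rw [hY, ha2, FreeGroup.mul_mk]
    rfl
  intro h
  rw [hx, hy, FreeGroup.mul_mk, FreeGroup.mul_mk] at h
  have h2 := congrArg FreeGroup.toWord h
  rw [FreeGroup.toWord_mk, FreeGroup.toWord_mk] at h2
  exact absurd h2 (by decide)

theorem not_echelon_K : ¬ IsEchelon (HH ⊓ HH') := by
  rintro ⟨mm, v, hvb, hcond⟩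
  have hm2 : mm = 2 := basis_card v hvb
  subst hm2
  obtain ⟨r, r', hr', hr, hle⟩ := hcond 1
  have hKv : HH ⊓ HH' ⊓ prefixSubgroup v 1 = ⊥ := by
    apply (Subgroup.eq_bot_iff_forall _).2
    intro g hg
    obtain ⟨hgK, hgv⟩ := hg
    rw [prefix1 v] at hgv
    obtain ⟨n, hn⟩ := Subgroup.mem_closure_singleton.1 hgv
    rcases eq_or_ne n 0 with rfl | hn0
    · rw [← hn, zpow_zero]
    · exact (no_primitive_power v hvb n hn0 (by rw [hn]; exact hgK)).elim
  have hv1 : ((1 : Fin 2) : ℕ) = 1 := rfl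
  rw [hv1] at hr' hr
  rw [hKv] at hr'
  have hr'0 : r' = 0 := hasRank_bot_zero hr'
  rw [prefix2 v hvb, inf_top_eq] at hr
  have hrle : r ≤ 1 := by omega
  have hcomm := comm_of_hasRank_le_one hr hrle xel_mem yel_mem
  exact xy_ne hcomm

end S14

theorem statement14 :
    IsEchelon (Subgroup.closure {a ^ 2, b ^ 2 * a ^ 2 * b ^ 2}) ∧
    IsEchelon (Subgroup.closure {b ^ 2, a ^ 2 * b ^ 2 * a ^ 2}) ∧
    ¬ IsEchelon (Subgroup.closure {a ^ 2, b ^ 2 * a ^ 2 * b ^ 2} ⊓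
        Subgroup.closure {b ^ 2, a ^ 2 * b ^ 2 * a ^ 2}) :=
  ⟨S14.echelon_HH, S14.echelon_HH', S14.not_echelon_K⟩
end

section
/- Let F_2 = ⟨a,b⟩ and K = ⟨a²b²a²b², b²a²b²a²⟩. Then K contains no nontrivial power of any primitive element of F_2; consequently, for every primitive element p of F_2 one has K ∩ ⟨p⟩ = {1}. -/
/-- An element is primitive if it belongs to some basis of the free group. -/
def IsPrimitive {n : ℕ} (p : FreeGroup (Fin n)) : Prop :=
  ∃ c : Fin n → FreeGroup (Fin n), IsFreeBasis c ∧ ∃ i, c i = p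

noncomputable def K : Subgroup (FreeGroup (Fin 2)) :=
  Subgroup.closure {a ^ 2 * b ^ 2 * a ^ 2 * b ^ 2, b ^ 2 * a ^ 2 * b ^ 2 * a ^ 2}

def negE : Equiv.Perm ℚ where
  toFun x := -x
  invFun x := -x
  left_inv x := neg_neg x
  right_inv x := neg_neg x

def bEq : Equiv.Perm ℚ where
  toFun x := 1 - x
  invFun x := 1 - x
  left_inv x := sub_sub_cancel 1 x
  right_inv x := sub_sub_cancel 1 x

noncomputable def ψ : FreeGroup (Fin 2) →* Equiv.Perm ℚ := FreeGroup.lift ![negE, bEq]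

noncomputable def ea : FreeGroup (Fin 2) →* Multiplicative ℤ :=
  FreeGroup.lift ![Multiplicative.ofAdd 1, 1]

noncomputable def eb : FreeGroup (Fin 2) →* Multiplicative ℤ :=
  FreeGroup.lift ![1, Multiplicative.ofAdd 1]

noncomputable def η : FreeGroup (Fin 2) →* ℚˣ := (zpowersHom ℚˣ (-1)).comp (ea * eb)

@[simp] lemma psi_a : ψ a = negE := by simp [ψ, a, FreeGroup.lift_apply_of]
@[simp] lemma psi_b : ψ b = bEq := by simp [ψ, b, FreeGroup.lift_apply_of]
@[simp] lemma negE_apply (x : ℚ) : negE x = -x := rfl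
@[simp] lemma bEq_apply (x : ℚ) : bEq x = 1 - x := rfl

lemma negE_sq : negE * negE = 1 := by
  ext x; simp [Equiv.Perm.mul_apply]

lemma bEq_sq : bEq * bEq = 1 := by
  ext x; simp [Equiv.Perm.mul_apply]

lemma K_le_ker_psi : K ≤ ψ.ker := by
  rw [K]
  apply Subgroup.closure_le _ |>.mpr
  rintro x (rfl | rfl) <;>
    simp [MonoidHom.mem_ker, map_mul, map_pow, pow_two, negE_sq, bEq_sq]

lemma d_a : ea a * (eb a)⁻¹ = Multiplicative.ofAdd 1 := by
  simp [ea, eb, a, FreeGroup.lift_apply_of]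

lemma d_b : ea b * (eb b)⁻¹ = (Multiplicative.ofAdd 1)⁻¹ := by
  simp [ea, eb, b, FreeGroup.lift_apply_of]

noncomputable def d : FreeGroup (Fin 2) →* Multiplicative ℤ := ea * eb⁻¹

lemma K_le_ker_d : K ≤ d.ker := by
  rw [K]
  apply Subgroup.closure_le _ |>.mpr
  rintro x (rfl | rfl) <;>
  · show _ ∈ d.ker
    rw [MonoidHom.mem_ker]
    simp only [map_mul, map_pow, d, MonoidHom.mul_apply, MonoidHom.inv_apply]
    simp only [ea, eb, a, b, FreeGroup.lift_apply_of, ← ofAdd_neg, ← ofAdd_add]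
    simp only [Matrix.cons_val_zero, Matrix.cons_val_one, Matrix.head_cons]
    rw [← toAdd_eq_zero]
    simp [toAdd_mul, toAdd_pow]

lemma eta_val (w : FreeGroup (Fin 2)) :
    η w = (-1 : ℚˣ) ^ (Multiplicative.toAdd (ea w) + Multiplicative.toAdd (eb w)) := by
  simp [η, zpowersHom_apply, toAdd_mul]

lemma aff_inv (w : FreeGroup (Fin 2)) (ih : ∀ x : ℚ, ψ w x = (η w : ℚ) * x + ψ w 0)
    (x : ℚ) : ψ w⁻¹ x = (η w⁻¹ : ℚ) * x + ψ w⁻¹ 0 := by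
  have hu : (η w : ℚ) ≠ 0 := Units.ne_zero _
  have key : ∀ y : ℚ, ψ w⁻¹ y = (y - ψ w 0) / (η w : ℚ) := by
    intro y
    have h1 := ih ((ψ w)⁻¹ y)
    rw [show (ψ w) ((ψ w)⁻¹ y) = y from Equiv.apply_symm_apply _ _] at h1
    rw [map_inv, eq_div_iff hu, mul_comm]
    linarith [h1]
  have h2 : (η w⁻¹ : ℚ) = ((η w : ℚ))⁻¹ := by rw [map_inv]; simp
  rw [key x, key 0, h2]
  field_simp
  ring

lemma psi_affine (w : FreeGroup (Fin 2)) (x : ℚ) :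
    ψ w x = (η w : ℚ) * x + ψ w 0 := by
  induction w using FreeGroup.induction_on generalizing x with
  | C1 => simp
  | of i =>
      have : (FreeGroup.of i : FreeGroup (Fin 2)) = FreeGroup.of i := rfl
      fin_cases i
      · show ψ a x = (η a : ℚ) * x + ψ a 0
        have : (η a : ℚ) = -1 := by
          rw [eta_val]; simp [ea, eb, a, FreeGroup.lift_apply_of]
        simp [this]
      · show ψ b x = (η b : ℚ) * x + ψ b 0
        have : (η b : ℚ) = -1 := by
          rw [eta_val]; simp [ea, eb, b, FreeGroup.lift_apply_of]
        simp [this]; ring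
  | inv_of i ih => exact aff_inv (pure i) ih x
  | mul u v ihu ihv =>
      have h1 : ∀ y : ℚ, ψ (u * v) y = (η u : ℚ) * ((η v : ℚ) * y + ψ v 0) + ψ u 0 := by
        intro y
        rw [map_mul, Equiv.Perm.mul_apply, ihv y, ihu]
      rw [h1 x, h1 0, map_mul, Units.val_mul]
      ring

theorem power_not_in_K (p : FreeGroup (Fin 2))
    (hp : ∃ c : Fin 2 → FreeGroup (Fin 2),
      Function.Bijective (FreeGroup.lift c) ∧ ∃ i, c i = p) :
    ∀ m : ℤ, m ≠ 0 → p ^ m ∉ K := by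
  intro m hm hmem
  -- step 1 : d p = 1
  have hd : d p = 1 := by
    have h1 : d (p ^ m) = 1 := K_le_ker_d hmem
    rw [map_zpow] at h1
    have h2 : m • Multiplicative.toAdd (d p) = 0 := by
      rw [← toAdd_zpow, h1, toAdd_one]
    rcases smul_eq_zero.mp h2 with h | h
    · exact absurd h hm
    · exact toAdd_eq_zero.mp h
  -- step 2 : η p = 1 (even exponent sum)
  have heta : (η p : ℚ) = 1 := by
    have heq : ea p = eb p := by
      have : ea p * (eb p)⁻¹ = 1 := hd
      exact mul_inv_eq_one.mp this
    rw [eta_val, heq]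
    have : Multiplicative.toAdd (eb p) + Multiplicative.toAdd (eb p)
        = 2 * Multiplicative.toAdd (eb p) := by ring
    rw [this, zpow_mul]
    norm_num
  -- step 3 : ψ p is a translation with (ψ p)^m = 1, hence ψ p = 1
  have hker : ψ (p ^ m) = 1 := K_le_ker_psi hmem
  rw [map_zpow] at hker
  set c0 : ℚ := ψ p 0 with hc0
  have htrans : ∀ y : ℚ, ψ p y = y + c0 := by
    intro y; rw [psi_affine, heta, one_mul]
  have hiter : ∀ n : ℕ, ((ψ p) ^ n) 0 = n * c0 := by
    intro n
    induction n with
    | zero => simp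
    | succ k ih =>
        rw [pow_succ', Equiv.Perm.mul_apply, ih, htrans]
        push_cast; ring
  have hnat : (ψ p) ^ m.natAbs = 1 := by
    rcases Int.natAbs_eq m with h | h
    · rw [h, zpow_natCast] at hker; exact hker
    · rw [h, zpow_neg, zpow_natCast, inv_eq_one] at hker; exact hker
  have hc00 : c0 = 0 := by
    have h := hiter m.natAbs
    rw [hnat] at h
    have hnz : (m.natAbs : ℚ) ≠ 0 := by
      exact_mod_cast Int.natAbs_ne_zero.mpr hm
    have h1 : (0 : ℚ) = (m.natAbs : ℚ) * c0 := h
    have h1 := mul_eq_zero.mp h1.symm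
    simp only [Nat.cast_eq_zero, Int.natAbs_eq_zero] at h1
    rcases h1 with h1 | h1
    · exact absurd h1 hm
    · exact h1
  have hpsi1 : ψ p = 1 := by
    ext y
    rw [htrans y, hc00, add_zero]; rfl
  -- step 4 : primitive element in the kernel is impossible
  obtain ⟨c, hc, i, hci⟩ := hp
  have hki : ∀ (i k : Fin 2), k = i ∨ k = i + 1 := by decide
  have hall : ∀ w : FreeGroup (Fin 2),
      ψ (FreeGroup.lift c w) ∈ Subgroup.zpowers (ψ (c (i + 1))) := by
    intro w
    induction w using FreeGroup.induction_on with
    | C1 => rw [map_one, map_one]; exact one_mem _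
    | of k =>
        rcases hki i k with h | h
        · have h1 : ψ (FreeGroup.lift c (FreeGroup.of k)) = 1 := by
            show ψ (FreeGroup.lift c (FreeGroup.of k)) = 1
            rw [FreeGroup.lift_apply_of, h, hci, hpsi1]
          rw [h1]; exact one_mem _
        · have h1 : ψ (FreeGroup.lift c (FreeGroup.of k)) = ψ (c (i + 1)) := by
            show ψ (FreeGroup.lift c (FreeGroup.of k)) = _
            rw [FreeGroup.lift_apply_of, h]
          rw [h1]; exact Subgroup.mem_zpowers _
    | inv_of k ih => rw [map_inv, map_inv]; exact inv_mem ih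
    | mul u v ihu ihv => rw [map_mul, map_mul]; exact mul_mem ihu ihv
  obtain ⟨u, hu⟩ := hc.2 a
  obtain ⟨v, hv⟩ := hc.2 b
  have hau : ψ a ∈ Subgroup.zpowers (ψ (c (i + 1))) := by
    have := hall u; rwa [hu] at this
  have hbv : ψ b ∈ Subgroup.zpowers (ψ (c (i + 1))) := by
    have := hall v; rwa [hv] at this
  obtain ⟨k, hk⟩ := Subgroup.mem_zpowers_iff.mp hau
  obtain ⟨l, hl⟩ := Subgroup.mem_zpowers_iff.mp hbv
  have hcomm : ψ a * ψ b = ψ b * ψ a := by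
    rw [← hk, ← hl, ← zpow_add, ← zpow_add, Int.add_comm k l]
  have h0 := congrArg (fun f : Equiv.Perm ℚ => f 0) hcomm
  simp [Equiv.Perm.mul_apply] at h0
  norm_num at h0

theorem statement15 (p : FreeGroup (Fin 2)) (hp : IsPrimitive p) :
    (∀ m : ℤ, m ≠ 0 → p ^ m ∉ K) ∧ K ⊓ Subgroup.closure {p} = ⊥ := by
  have h1 : ∀ m : ℤ, m ≠ 0 → p ^ m ∉ K := power_not_in_K p hp
  refine ⟨h1, ?_⟩
  rw [← Subgroup.zpowers_eq_closure, Subgroup.eq_bot_iff_forall]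
  intro x hx
  obtain ⟨hxK, hxp⟩ := Subgroup.mem_inf.mp hx
  obtain ⟨m, hm⟩ := Subgroup.mem_zpowers_iff.mp hxp
  by_cases h : m = 0
  · rw [← hm, h, zpow_zero]
  · rw [← hm] at hxK
    exact absurd hxK (h1 m h)
end
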